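/- arXiv:2306.12698 — 6 statements merged into one kernel-verified Lean document; each statement's English description precedes it below -/
import Mathlib

section
/- For every Q ≥ 2 there exists a family of M = Q(Q−1)+1 sketching vectors α_1, …, α_M ∈ ℂ^Q such that the map sending a Hermitian matrix I ∈ ℂ^{Q×Q} to its SROP measurements (α_1^* I α_1, …, α_M^* I α_M) is injective on the set of Hermitian Q×Q matrices all of whose diagonal entries are equal. Consequently, any such matrix can be reconstructed from these M sketches. -/
open Matrix

/-- Auxiliary: the sketching vector attached to a measurement label.
`none` is the single diagonal measurement `e_0`; `some ((q,q'), _)` with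
`q < q'` is `e_q + e_{q'}` (real part) and with `q > q'` (stored as the pair
`(q, q')` with `q' < q`... i.e. the reversed pair) is `e_{q'} + i e_q`
(imaginary part). -/
noncomputable def SROPvec (Q : ℕ) (hQ : 0 < Q) :
    Option {p : Fin Q × Fin Q // p.1 ≠ p.2} → (Fin Q → ℂ)
  | none => Pi.single ⟨0, hQ⟩ 1
  | some p =>
      if p.1.1 < p.1.2 then Pi.single p.1.1 1 + Pi.single p.1.2 1
      else Pi.single p.1.2 1 + Pi.single p.1.1 Complex.I

/-- Quadratic form of a two-sparse vector. -/
theorem SROP_key (Q : ℕ) (H : Matrix (Fin Q) (Fin Q) ℂ) (q q' : Fin Q) (a b : ℂ) :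
    dotProduct (star (Pi.single q a + Pi.single q' b)) (H *ᵥ (Pi.single q a + Pi.single q' b))
      = (starRingEnd ℂ) a * H q q * a + (starRingEnd ℂ) a * H q q' * b
        + (starRingEnd ℂ) b * H q' q * a + (starRingEnd ℂ) b * H q' q' * b := by
  simp [mulVec_add, dotProduct_add, add_dotProduct, mulVec_single, star_add,
    ← Pi.single_star, single_dotProduct, dotProduct_single]
  ring

theorem SROP_key1 (Q : ℕ) (H : Matrix (Fin Q) (Fin Q) ℂ) (z : Fin Q) :
    dotProduct (star (Pi.single z (1:ℂ))) (H *ᵥ Pi.single z 1) = H z z := by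
  simp [mulVec_single, ← Pi.single_star, single_dotProduct]

/-- **Nyquist recovery of the interferometric matrix.**
For every `Q ≥ 2` there exists a family of `M = Q(Q-1)+1` sketching vectors
`α_1, …, α_M ∈ ℂ^Q` such that the SROP measurement map
`I ↦ (α_m^* I α_m)_m` is injective on the set of Hermitian `Q×Q` matrices
all of whose diagonal entries are equal. -/
theorem sketching_vectors_exist_injective_on_const_diag_hermitian
    (Q : ℕ) (hQ : 2 ≤ Q) :
    ∃ α : Fin (Q * (Q - 1) + 1) → (Fin Q → ℂ),
      ∀ I J : Matrix (Fin Q) (Fin Q) ℂ,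
        I.IsHermitian → J.IsHermitian →
        (∀ q q' : Fin Q, I q q = I q' q') →
        (∀ q q' : Fin Q, J q q = J q' q') →
        (∀ m : Fin (Q * (Q - 1) + 1),
          dotProduct (star (α m)) (I *ᵥ α m) = dotProduct (star (α m)) (J *ᵥ α m)) →
        I = J := by
  have hQ0 : 0 < Q := by omega
  -- cardinality of the label type
  have hcard : Fintype.card (Fin (Q * (Q - 1) + 1))
      = Fintype.card (Option {p : Fin Q × Fin Q // p.1 ≠ p.2}) := by
    have e : {p : Fin Q × Fin Q // p.1 = p.2} ≃ Fin Q :=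
      ⟨fun p => p.1.1, fun q => ⟨(q, q), rfl⟩,
       fun p => by obtain ⟨⟨a, b⟩, h⟩ := p; simp at h; simp [h], fun q => rfl⟩
    have h1 : Fintype.card {p : Fin Q × Fin Q // p.1 = p.2} = Q := by
      rw [Fintype.card_congr e, Fintype.card_fin]
    have h2 : Fintype.card {p : Fin Q × Fin Q // p.1 ≠ p.2} = Q * Q - Q := by
      have := Fintype.card_subtype_compl (fun p : Fin Q × Fin Q => p.1 = p.2)
      simp only [h1, Fintype.card_prod, Fintype.card_fin] at this
      convert this using 2
    have h3 : Q * (Q - 1) = Q * Q - Q := by rw [Nat.mul_sub, mul_one]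
    simp [Fintype.card_option, h2, h3]
  let e := Fintype.equivOfCardEq hcard
  refine ⟨fun m => SROPvec Q hQ0 (e m), ?_⟩
  intro I J hI hJ hdI hdJ hm
  have hmT : ∀ t, dotProduct (star (SROPvec Q hQ0 t)) (I *ᵥ SROPvec Q hQ0 t)
      = dotProduct (star (SROPvec Q hQ0 t)) (J *ᵥ SROPvec Q hQ0 t) := by
    intro t
    simpa only [Equiv.apply_symm_apply] using hm (e.symm t)
  -- diagonal entries agree
  have hdiag : ∀ q, I q q = J q q := by
    intro q
    have h0 := hmT none
    rw [show SROPvec Q hQ0 none = Pi.single ⟨0, hQ0⟩ 1 from rfl,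
      SROP_key1, SROP_key1] at h0
    calc I q q = I ⟨0, hQ0⟩ ⟨0, hQ0⟩ := hdI q _
      _ = J ⟨0, hQ0⟩ ⟨0, hQ0⟩ := h0
      _ = J q q := hdJ _ q
  -- off-diagonal entries agree (q < q')
  have hoff : ∀ q q' : Fin Q, q < q' → I q q' = J q q' := by
    intro q q' h
    have t1 := hmT (some ⟨(q, q'), h.ne⟩)
    rw [show SROPvec Q hQ0 (some ⟨(q, q'), h.ne⟩) = Pi.single q 1 + Pi.single q' 1 from by
        simp [SROPvec, h]] at t1
    rw [SROP_key Q I q q' 1 1, SROP_key Q J q q' 1 1] at t1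
    have t2 := hmT (some ⟨(q', q), h.ne'⟩)
    rw [show SROPvec Q hQ0 (some ⟨(q', q), h.ne'⟩)
          = Pi.single q 1 + Pi.single q' Complex.I from by
        simp [SROPvec, not_lt_of_gt h]] at t2
    rw [SROP_key Q I q q' 1 Complex.I, SROP_key Q J q q' 1 Complex.I] at t2
    simp only [_root_.map_one, one_mul, mul_one, Complex.conj_I] at t1 t2
    have t2' : I q q + Complex.I * I q q' - Complex.I * I q' q + I q' q'
        = J q q + Complex.I * J q q' - Complex.I * J q' q + J q' q' := by
      linear_combination t2 + (I q' q' - J q' q') * Complex.I_sq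
    have dq := hdiag q
    have dq' := hdiag q'
    linear_combination t1 / 2 - Complex.I / 2 * t2'
      + (Complex.I / 2 - 1 / 2) * dq + (Complex.I / 2 - 1 / 2) * dq'
      + ((I q q' - J q q') - (I q' q - J q' q)) / 2 * Complex.I_sq
  ext q q'
  rcases lt_trichotomy q q' with h | h | h
  · exact hoff q q' h
  · subst h; exact hdiag q
  · rw [← hI.apply, ← hJ.apply, hoff q' q h]
end

section
/- Let B : ℝ^N → ℝ^M be a linear map and let K, K' be positive integers with K' > 2K. Suppose that for both k = K' and k = K+K', B satisfies the RIP_{ℓ2/ℓ1}(Σ_k, m_k, M_k) with 0 < m_k ≤ M_k < ∞, and suppose (1/√2)·m_{K+K'} − M_{K'}·√(K/K') ≥ γ for some γ > 0. Let f ∈ ℝ^N, let y = B(f) + n with ‖n‖₁ ≤ ε, and let f̃ be any minimizer of ‖v‖₁ over the set {v ∈ ℝ^N : ‖y − B(v)‖₁ ≤ ε}. Then ‖f − f̃‖₂ ≤ C₀·‖f − f_K‖₁/√K' + D₀·ε/M, where C₀ = (2+√2)·M_{K'}/γ + 2 and D₀ = (2+√2)/γ, and f_K denotes a best K-term approximation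 of f (f restricted to a set of K indices of largest-magnitude entries). -/
open Finset

/-- The `ℓ1` norm on `Fin n → ℝ`. -/
noncomputable def l1norm {n : ℕ} (x : Fin n → ℝ) : ℝ := ∑ i, |x i|

/-- The `ℓ2` norm on `Fin n → ℝ`. -/
noncomputable def l2norm {n : ℕ} (x : Fin n → ℝ) : ℝ := Real.sqrt (∑ i, x i ^ 2)

/-- `x` has at most `k` nonzero entries. -/
def Sparse {n : ℕ} (k : ℕ) (x : Fin n → ℝ) : Prop :=
  ∃ s : Finset (Fin n), s.card ≤ k ∧ ∀ i ∉ s, x i = 0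

/-- The restriction of `x` to the index set `S` (zero outside `S`). -/
def restr {n : ℕ} (x : Fin n → ℝ) (S : Finset (Fin n)) : Fin n → ℝ :=
  fun i => if i ∈ S then x i else 0

/-- `B` satisfies the `RIP_{ℓ2/ℓ1}(Σ_k, mk, Mk)`:
`mk ‖v‖₂ ≤ (1/M) ‖B v‖₁ ≤ Mk ‖v‖₂` for all `k`-sparse `v`. -/
def RIPl2l1 {N M : ℕ} (B : (Fin N → ℝ) →ₗ[ℝ] (Fin M → ℝ)) (k : ℕ) (mk Mk : ℝ) : Prop :=
  ∀ v : Fin N → ℝ, Sparse k v →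
    mk * l2norm v ≤ (1 / (M : ℝ)) * l1norm (B v) ∧
    (1 / (M : ℝ)) * l1norm (B v) ≤ Mk * l2norm v

namespace BPDNaux

lemma l1norm_nonneg {N : ℕ} (x : Fin N → ℝ) : 0 ≤ l1norm x :=
  Finset.sum_nonneg fun i _ => abs_nonneg _

lemma l2norm_nonneg {N : ℕ} (x : Fin N → ℝ) : 0 ≤ l2norm x := Real.sqrt_nonneg _

lemma l1norm_sub_le {N : ℕ} (x z : Fin N → ℝ) :
    l1norm (fun i => x i - z i) ≤ l1norm x + l1norm z := by
  rw [l1norm, l1norm, l1norm, ← Finset.sum_add_distrib]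
  exact Finset.sum_le_sum fun i _ => abs_sub (x i) (z i)

lemma l1norm_sum_le {N : ℕ} {α : Type*} (s : Finset α) (v : α → Fin N → ℝ) :
    l1norm (fun i => ∑ j ∈ s, v j i) ≤ ∑ j ∈ s, l1norm (v j) := by
  rw [l1norm]
  calc ∑ i, |∑ j ∈ s, v j i| ≤ ∑ i, ∑ j ∈ s, |v j i| :=
        Finset.sum_le_sum fun i _ => Finset.abs_sum_le_sum_abs _ _
    _ = ∑ j ∈ s, l1norm (v j) := by rw [Finset.sum_comm]; rfl

lemma l1norm_restr {N : ℕ} (x : Fin N → ℝ) (s : Finset (Fin N)) :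
    l1norm (restr x s) = ∑ i ∈ s, |x i| := by
  rw [l1norm]
  rw [Finset.sum_congr rfl (fun i _ => by
    show |restr x s i| = if i ∈ s then |x i| else 0
    unfold restr; split <;> simp)]
  simp [Finset.sum_ite_mem]

lemma sum_sq_restr {N : ℕ} (x : Fin N → ℝ) (s : Finset (Fin N)) :
    ∑ i, (restr x s i) ^ 2 = ∑ i ∈ s, x i ^ 2 := by
  rw [Finset.sum_congr rfl (fun i _ => by
    show (restr x s i) ^ 2 = if i ∈ s then x i ^ 2 else 0
    unfold restr; split <;> simp)]
  simp [Finset.sum_ite_mem]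

lemma l2norm_restr {N : ℕ} (x : Fin N → ℝ) (s : Finset (Fin N)) :
    l2norm (restr x s) = Real.sqrt (∑ i ∈ s, x i ^ 2) := by
  rw [l2norm, sum_sq_restr]

lemma sqrt_add_le {x y : ℝ} (hx : 0 ≤ x) (hy : 0 ≤ y) :
    Real.sqrt (x + y) ≤ Real.sqrt x + Real.sqrt y := by
  have h1 := Real.sq_sqrt hx
  have h2 := Real.sq_sqrt hy
  have h3 := Real.sqrt_nonneg x
  have h4 := Real.sqrt_nonneg y
  have : x + y ≤ (Real.sqrt x + Real.sqrt y) ^ 2 := by nlinarith [mul_nonneg h3 h4]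
  calc Real.sqrt (x + y) ≤ Real.sqrt ((Real.sqrt x + Real.sqrt y) ^ 2) :=
        Real.sqrt_le_sqrt this
    _ = Real.sqrt x + Real.sqrt y := Real.sqrt_sq (by positivity)

lemma sqrt_sum_le_sum_sqrt {α : Type*} (s : Finset α) (x : α → ℝ) (hx : ∀ j ∈ s, 0 ≤ x j) :
    Real.sqrt (∑ j ∈ s, x j) ≤ ∑ j ∈ s, Real.sqrt (x j) := by
  induction s using Finset.cons_induction with
  | empty => simp
  | cons a s ha ih =>
    rw [Finset.sum_cons, Finset.sum_cons]
    calc Real.sqrt (x a + ∑ j ∈ s, x j)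
        ≤ Real.sqrt (x a) + Real.sqrt (∑ j ∈ s, x j) :=
          sqrt_add_le (hx a (Finset.mem_cons_self _ _))
            (Finset.sum_nonneg fun j hj => hx j (Finset.mem_cons_of_mem hj))
      _ ≤ Real.sqrt (x a) + ∑ j ∈ s, Real.sqrt (x j) := by
          have := ih (fun j hj => hx j (Finset.mem_cons_of_mem hj))
          linarith

lemma l1_le_sqrt_card_mul {N : ℕ} (x : Fin N → ℝ) (s : Finset (Fin N)) :
    ∑ i ∈ s, |x i| ≤ Real.sqrt s.card * Real.sqrt (∑ i ∈ s, x i ^ 2) := by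
  have h := sq_sum_le_card_mul_sum_sq (s := s) (f := fun i => |x i|)
  simp only [sq_abs] at h
  have h1 : 0 ≤ ∑ i ∈ s, |x i| := Finset.sum_nonneg fun i _ => abs_nonneg _
  calc ∑ i ∈ s, |x i| = Real.sqrt ((∑ i ∈ s, |x i|) ^ 2) := (Real.sqrt_sq h1).symm
    _ ≤ Real.sqrt ((s.card : ℝ) * ∑ i ∈ s, x i ^ 2) := Real.sqrt_le_sqrt h
    _ = Real.sqrt s.card * Real.sqrt (∑ i ∈ s, x i ^ 2) := Real.sqrt_mul (by positivity) _

end BPDNaux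


set_option maxHeartbeats 1000000 in
/-- **`ℓ2/ℓ1` instance optimality of `BPDN_{ℓ1}`** (Proposition 1).
If `B` has the `RIP_{ℓ2/ℓ1}` on `Σ_{K'}` and `Σ_{K+K'}` with `K' > 2K` and
`(1/√2) m_{K+K'} − M_{K'} √(K/K') ≥ γ > 0`, then any `ℓ1`-minimizer `f̃` over
the feasible set `{v : ‖y − B v‖₁ ≤ ε}`, where `y = B f + n` with `‖n‖₁ ≤ ε`,
satisfies `‖f − f̃‖₂ ≤ C₀ ‖f − f_K‖₁/√K' + D₀ ε/M` with
`C₀ = (2+√2) M_{K'}/γ + 2` and `D₀ = (2+√2)/γ`. -/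
theorem bpdn_l1_instance_optimality
    {N M K K' : ℕ} (hM : 0 < M) (hK : 0 < K) (hK' : 0 < K')
    (hKK' : 2 * K < K')
    (B : (Fin N → ℝ) →ₗ[ℝ] (Fin M → ℝ))
    (mK' MK' mKK' MKK' : ℝ)
    (hmK' : 0 < mK') (hMK' : mK' ≤ MK')
    (hmKK' : 0 < mKK') (hMKK' : mKK' ≤ MKK')
    (hRIP1 : RIPl2l1 B K' mK' MK')
    (hRIP2 : RIPl2l1 B (K + K') mKK' MKK')
    (γ : ℝ) (hγ : 0 < γ)
    (hgap : γ ≤ (1 / Real.sqrt 2) * mKK' - MK' * Real.sqrt ((K : ℝ) / (K' : ℝ)))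
    (f : Fin N → ℝ) (nv : Fin M → ℝ) (ε : ℝ) (hn : l1norm nv ≤ ε)
    (y : Fin M → ℝ) (hy : y = fun i => B f i + nv i)
    (T₀ : Finset (Fin N)) (hT₀card : T₀.card = K)
    (hT₀max : ∀ i ∈ T₀, ∀ j ∉ T₀, |f j| ≤ |f i|)
    (ftil : Fin N → ℝ)
    (hfeas : l1norm (fun i => y i - B ftil i) ≤ ε)
    (hopt : ∀ v : Fin N → ℝ, l1norm (fun i => y i - B v i) ≤ ε →
      l1norm ftil ≤ l1norm v) :
    l2norm (fun i => f i - ftil i)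
      ≤ ((2 + Real.sqrt 2) * MK' / γ + 2) * (l1norm (restr f T₀ᶜ) / Real.sqrt (K' : ℝ))
        + ((2 + Real.sqrt 2) / γ) * (ε / (M : ℝ)) := by
  classical
  subst hy
  set h : Fin N → ℝ := fun i => f i - ftil i with hh
  have hM0 : (0:ℝ) < M := by exact_mod_cast hM
  have hK'0 : (0:ℝ) < K' := by exact_mod_cast hK'
  have hsK' : (0:ℝ) < Real.sqrt K' := Real.sqrt_pos.mpr hK'0
  have hε0 : 0 ≤ ε := le_trans (BPDNaux.l1norm_nonneg nv) hn
  have hMK'0 : 0 < MK' := lt_of_lt_of_le hmK' hMK'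
  -- tube constraint
  have htube : l1norm (B h) ≤ 2 * ε := by
    have hBh : (B h : Fin M → ℝ)
        = fun i => ((B f i + nv i) - B ftil i) - nv i := by
      have h1 : h = f - ftil := rfl
      rw [h1, map_sub]
      funext i
      show B f i - B ftil i = _
      ring
    rw [hBh]
    calc l1norm (fun i => ((B f i + nv i) - B ftil i) - nv i)
        ≤ l1norm (fun i => (B f i + nv i) - B ftil i) + l1norm nv :=
          BPDNaux.l1norm_sub_le _ _
      _ ≤ ε + ε := add_le_add hfeas hn
      _ = 2 * ε := by ring
  -- cone constraint
  have hfeasf : l1norm (fun i => (B f i + nv i) - B f i) ≤ ε := by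
    have : (fun i => (B f i + nv i) - B f i) = nv := by funext i; ring
    rw [this]; exact hn
  have hcone : ∑ i ∈ T₀ᶜ, |h i| ≤ ∑ i ∈ T₀, |h i| + 2 * ∑ i ∈ T₀ᶜ, |f i| := by
    have hlef : l1norm ftil ≤ l1norm f := hopt f hfeasf
    have hft : ∀ i, ftil i = f i - h i := by intro i; simp [hh]
    have h1 : ∑ i ∈ T₀, (|f i| - |h i|) ≤ ∑ i ∈ T₀, |ftil i| := by
      refine Finset.sum_le_sum fun i _ => ?_
      rw [hft i]; exact abs_sub_abs_le_abs_sub _ _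
    have h2 : ∑ i ∈ T₀ᶜ, (|h i| - |f i|) ≤ ∑ i ∈ T₀ᶜ, |ftil i| := by
      refine Finset.sum_le_sum fun i _ => ?_
      rw [hft i]
      calc |h i| - |f i| ≤ |h i - f i| := abs_sub_abs_le_abs_sub _ _
        _ = |f i - h i| := abs_sub_comm _ _
    have hsplitft : ∑ i ∈ T₀, |ftil i| + ∑ i ∈ T₀ᶜ, |ftil i| = l1norm ftil :=
      Finset.sum_add_sum_compl T₀ _
    have hsplitf : ∑ i ∈ T₀, |f i| + ∑ i ∈ T₀ᶜ, |f i| = l1norm f :=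
      Finset.sum_add_sum_compl T₀ _
    rw [Finset.sum_sub_distrib] at h1 h2
    linarith
  -- enumeration of T₀ᶜ by decreasing |h|
  set n' := T₀ᶜ.card with hn'
  obtain ⟨em, hem_inj, hem_mem, hem_surj, hem_anti⟩ :
      ∃ em : Fin n' → Fin N, Function.Injective em ∧ (∀ t, em t ∈ T₀ᶜ) ∧
        (∀ i ∈ T₀ᶜ, ∃ t, em t = i) ∧
        (∀ s t : Fin n', s ≤ t → |h (em t)| ≤ |h (em s)|) := by
    set e0 : Fin n' ≃ {x // x ∈ T₀ᶜ} := T₀ᶜ.equivFin.symm with he0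
    set g : Fin n' → ℝ := fun t => -|h (e0 t)| with hg
    set σ := Tuple.sort g with hσ
    refine ⟨fun t => (e0 (σ t) : Fin N), ?_, ?_, ?_, ?_⟩
    · intro a b hab
      exact σ.injective (e0.injective (Subtype.coe_injective hab))
    · intro t; exact (e0 (σ t)).2
    · intro i hi
      obtain ⟨t, ht⟩ := e0.surjective ⟨i, hi⟩
      exact ⟨σ.symm t, by simp [ht]⟩
    · intro s t hst
      have := Tuple.monotone_sort g hst
      simp only [Function.comp_apply, hg, neg_le_neg_iff] at this
      exact this
  set p : ℕ := n' / K' with hp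
  set q : ℕ := p + 1 with hq
  have hn'q : n' < q * K' := (Nat.div_lt_iff_lt_mul hK').mp (Nat.lt_succ_self _)
  have hblkpf : ∀ j : ℕ, ∀ m ∈ Finset.Ico (j*K') (min ((j+1)*K') n'), m < n' :=
    fun j m hm => lt_of_lt_of_le (Finset.mem_Ico.mp hm).2 (min_le_right _ _)
  set blk : ℕ → Finset (Fin n') :=
    fun j => Finset.attachFin (Finset.Ico (j*K') (min ((j+1)*K') n')) (hblkpf j) with hblk
  have hblkmem : ∀ (j : ℕ) (t : Fin n'), t ∈ blk j ↔ (j*K' ≤ ↑t ∧ ↑t < (j+1)*K') := by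
    intro j t
    rw [hblk]
    simp only [Finset.mem_attachFin, Finset.mem_Ico, lt_min_iff]
    exact ⟨fun ⟨a, b, _⟩ => ⟨a, b⟩, fun ⟨a, b⟩ => ⟨a, b, t.isLt⟩⟩
  have hblkcard : ∀ j, (blk j).card ≤ K' := by
    intro j
    rw [hblk]
    simp only [Finset.card_attachFin, Nat.card_Ico]
    have : (j+1)*K' = j*K' + K' := by ring
    omega
  have hblkfull : ∀ j, (j+1)*K' ≤ n' → (blk j).card = K' := by
    intro j hj
    rw [hblk]
    simp only [Finset.card_attachFin, Nat.card_Ico, min_eq_left hj]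
    have : (j+1)*K' = j*K' + K' := by ring
    omega
  have hblkuniq : ∀ (t : Fin n') (j : ℕ), t ∈ blk j ↔ j = ↑t / K' := by
    intro t j
    rw [hblkmem]
    constructor
    · rintro ⟨h1, h2⟩
      exact (Nat.div_eq_of_lt_le h1 h2).symm
    · rintro rfl
      exact ⟨Nat.div_mul_le_self _ _,
        (Nat.div_lt_iff_lt_mul hK').mp (Nat.lt_succ_self _)⟩
  have hsum_blocks : ∀ c : Fin n' → ℝ,
      ∑ j ∈ Finset.range q, ∑ t ∈ blk j, c t = ∑ t, c t := by
    intro c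
    have hcover : (Finset.range q).biUnion blk = Finset.univ := by
      ext t
      simp only [Finset.mem_biUnion, Finset.mem_univ, iff_true]
      refine ⟨↑t / K', ?_, (hblkuniq t _).mpr rfl⟩
      rw [Finset.mem_range, hq]
      exact Nat.lt_succ_of_le (Nat.div_le_div_right (le_of_lt t.isLt))
    have hdisj : (↑(Finset.range q) : Set ℕ).PairwiseDisjoint blk := by
      intro j1 _ j2 _ hne
      refine Finset.disjoint_left.mpr fun t ht1 ht2 => hne ?_
      rw [hblkuniq] at ht1 ht2
      omega
    rw [← hcover, Finset.sum_biUnion hdisj]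
  -- the sequence of decreasing values
  set b : Fin n' → ℝ := fun t => |h (em t)| with hb
  have hb0 : ∀ t, 0 ≤ b t := fun t => abs_nonneg _
  set S : ℕ → ℝ := fun j => ∑ t ∈ blk j, b t with hS
  have hS0 : ∀ j, 0 ≤ S j := fun j => Finset.sum_nonneg fun t _ => hb0 t
  have hreindex : ∀ c : Fin N → ℝ, ∑ t : Fin n', c (em t) = ∑ i ∈ T₀ᶜ, c i := by
    intro c
    refine Finset.sum_bij (fun t _ => em t) (fun t _ => hem_mem t)
      (fun t1 _ t2 _ hee => hem_inj hee) (fun i hi => ?_) (fun t _ => rfl)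
    obtain ⟨t, ht⟩ := hem_surj i hi
    exact ⟨t, Finset.mem_univ t, ht⟩
  have hSsum : ∑ j ∈ Finset.range q, S j = ∑ i ∈ T₀ᶜ, |h i| := by
    rw [hS]
    rw [hsum_blocks b]
    exact hreindex (fun i => |h i|)
  set Tb : ℕ → Finset (Fin N) := fun j => (blk j).image em with hTb
  have hTbsub : ∀ j, Tb j ⊆ T₀ᶜ := by
    intro j i hi
    rw [hTb] at hi
    obtain ⟨t, _, rfl⟩ := Finset.mem_image.mp hi
    exact hem_mem t
  have hTbcard : ∀ j, (Tb j).card ≤ K' :=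
    fun j => le_trans Finset.card_image_le (hblkcard j)
  have hTb_sq : ∀ j, ∑ i ∈ Tb j, h i ^ 2 = ∑ t ∈ blk j, b t ^ 2 := by
    intro j
    rw [hTb, Finset.sum_image (fun t1 _ t2 _ hee => hem_inj hee)]
    exact Finset.sum_congr rfl fun t _ => by rw [hb]; rw [sq_abs]
  -- pointwise partition of restr h T₀ᶜ into blocks
  have hpart : ∀ i : Fin N,
      restr h T₀ᶜ i = ∑ j ∈ Finset.range q, restr h (Tb j) i := by
    intro i
    by_cases hi : i ∈ T₀ᶜ
    · obtain ⟨t, rfl⟩ := hem_surj i hi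
      have hmem0 : em t ∈ Tb (↑t / K') := by
        rw [hTb]
        exact Finset.mem_image_of_mem em ((hblkuniq t _).mpr rfl)
      have hrange : ↑t / K' ∈ Finset.range q := by
        rw [Finset.mem_range, hq]
        exact Nat.lt_succ_of_le (Nat.div_le_div_right (le_of_lt t.isLt))
      rw [show restr h T₀ᶜ (em t) = h (em t) from if_pos hi]
      rw [Finset.sum_eq_single (↑t / K')]
      · exact (if_pos hmem0).symm
      · intro j _ hne
        refine if_neg fun hmemj => hne ?_
        rw [hTb] at hmemj
        obtain ⟨t', ht', htt⟩ := Finset.mem_image.mp hmemj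
        rw [hem_inj htt] at ht'
        rw [hblkuniq] at ht'
        exact ht'
      · intro habs; exact absurd hrange habs
    · rw [show restr h T₀ᶜ i = 0 from if_neg hi]
      symm
      refine Finset.sum_eq_zero fun j _ => ?_
      exact if_neg fun hmem => hi (hTbsub j hmem)
  -- main vectors
  have hdisj0 : Disjoint T₀ (Tb 0) :=
    Finset.disjoint_left.mpr fun i hi hi' => by
      have := hTbsub 0 hi'
      rw [Finset.mem_compl] at this
      exact this hi
  set v01 : Fin N → ℝ := restr h (T₀ ∪ Tb 0) with hv01
  set A := l2norm v01 with hA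
  have hA0 : 0 ≤ A := BPDNaux.l2norm_nonneg _
  have hv01split : ∀ i, v01 i = restr h T₀ i + restr h (Tb 0) i := by
    intro i
    rw [hv01]
    unfold restr
    by_cases h1 : i ∈ T₀
    · have h2 : i ∉ Tb 0 := fun hc => (Finset.disjoint_left.mp hdisj0) h1 hc
      simp [Finset.mem_union, h1, h2]
    · by_cases h2 : i ∈ Tb 0 <;> simp [Finset.mem_union, h1, h2]
  have hcomplsplit : ∀ i, h i = restr h T₀ i + restr h T₀ᶜ i := by
    intro i
    unfold restr
    by_cases h1 : i ∈ T₀ <;> simp [h1]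
  have hq1 : p + 1 = q := hq.symm
  -- h - v01 is the sum of the later blocks
  have hrest : ∀ i, h i - v01 i = ∑ j ∈ Finset.range (p), restr h (Tb (j+1)) i := by
    intro i
    have e1 : ∑ j ∈ Finset.range q, restr h (Tb j) i
        = (∑ j ∈ Finset.range (p), restr h (Tb (j+1)) i) + restr h (Tb 0) i := by
      rw [← hq1, Finset.sum_range_succ' (fun j => restr h (Tb j) i) p]
    have h3 := hpart i
    rw [e1] at h3
    rw [hv01split i]
    have h2 := hcomplsplit i
    linarith
  -- sparsity
  have hsp_v01 : Sparse (K + K') v01 := by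
    refine ⟨T₀ ∪ Tb 0, ?_, fun i hi => ?_⟩
    · calc (T₀ ∪ Tb 0).card ≤ T₀.card + (Tb 0).card := Finset.card_union_le _ _
        _ ≤ K + K' := add_le_add (le_of_eq hT₀card) (hTbcard 0)
    · rw [hv01]; exact if_neg hi
  have hsp_T : ∀ j, Sparse K' (restr h (Tb j)) :=
    fun j => ⟨Tb j, hTbcard j, fun i hi => if_neg hi⟩
  -- RIP chain
  have hv01eq : v01 = h - ∑ j ∈ Finset.range (p), restr h (Tb (j+1)) := by
    funext i
    have := hrest i
    simp only [Pi.sub_apply, Finset.sum_apply]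
    linarith
  have hl1Bv01 : l1norm (B v01) ≤ l1norm (B h)
      + ∑ j ∈ Finset.range (p), l1norm (B (restr h (Tb (j+1)))) := by
    have hBeq : (B v01 : Fin M → ℝ)
        = fun i => B h i
          - (fun k => ∑ j ∈ Finset.range (p), B (restr h (Tb (j+1))) k) i := by
      rw [hv01eq, map_sub, map_sum]
      funext i
      simp [Finset.sum_apply]
    rw [hBeq]
    calc l1norm _ ≤ l1norm (B h)
          + l1norm (fun k => ∑ j ∈ Finset.range (p), B (restr h (Tb (j+1))) k) :=
        BPDNaux.l1norm_sub_le _ _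
      _ ≤ _ := by
          have := BPDNaux.l1norm_sum_le (Finset.range (p))
            (fun j => (B (restr h (Tb (j+1))) : Fin M → ℝ))
          linarith
  -- block decay estimate
  have hKid : Real.sqrt K' * Real.sqrt K' = (K':ℝ) := Real.mul_self_sqrt (le_of_lt hK'0)
  have hdecay : ∀ j : ℕ, Real.sqrt (∑ t ∈ blk (j+1), b t ^ 2) ≤ S j / Real.sqrt K' := by
    intro j
    by_cases hne : (blk (j+1)).Nonempty
    · have hfull : (blk j).card = K' := by
        obtain ⟨t, ht⟩ := hne
        have h1 := ((hblkmem (j+1) t).mp ht).1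
        have h2 := t.isLt
        exact hblkfull j (le_trans h1 (le_of_lt h2))
      have hbound : ∀ t ∈ blk (j+1), b t ≤ S j / K' := by
        intro t ht
        rw [le_div_iff₀ hK'0]
        have hle : ∀ s ∈ blk j, b t ≤ b s := by
          intro s hs
          apply hem_anti s t
          have h1 := (hblkmem j s).mp hs
          have h2 := (hblkmem (j+1) t).mp ht
          have h3 : (j+1)*K' = j*K' + K' := by ring
          exact Fin.le_def.mpr (by omega)
        calc b t * K' = ∑ _s ∈ blk j, b t := by
              rw [Finset.sum_const, hfull, nsmul_eq_mul]; ring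
          _ ≤ S j := Finset.sum_le_sum hle
      have hsq : ∑ t ∈ blk (j+1), b t ^ 2 ≤ (K':ℝ) * (S j / K')^2 := by
        calc ∑ t ∈ blk (j+1), b t ^ 2 ≤ ∑ _t ∈ blk (j+1), (S j / K')^2 :=
              Finset.sum_le_sum fun t ht => pow_le_pow_left₀ (hb0 t) (hbound t ht) 2
          _ = ((blk (j+1)).card : ℝ) * (S j / K')^2 := by
              rw [Finset.sum_const, nsmul_eq_mul]
          _ ≤ (K':ℝ) * (S j / K')^2 := by
              have hc : ((blk (j+1)).card : ℝ) ≤ (K' : ℝ) := by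
                exact_mod_cast hblkcard (j+1)
              exact mul_le_mul_of_nonneg_right hc (sq_nonneg _)
      calc Real.sqrt (∑ t ∈ blk (j+1), b t ^ 2)
          ≤ Real.sqrt ((K':ℝ) * (S j / K')^2) := Real.sqrt_le_sqrt hsq
        _ = Real.sqrt K' * (S j / K') := by
            rw [Real.sqrt_mul (le_of_lt hK'0), Real.sqrt_sq (by positivity)]
        _ = S j / Real.sqrt K' := by
            rw [eq_div_iff (ne_of_gt hsK')]
            field_simp
            linear_combination (S j) * hKid
    · rw [Finset.not_nonempty_iff_eq_empty.mp hne]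
      simp only [Finset.sum_empty, Real.sqrt_zero]
      positivity
  set E1 := ∑ i ∈ T₀ᶜ, |h i| with hE1
  have hE10 : 0 ≤ E1 := Finset.sum_nonneg fun i _ => abs_nonneg _
  have htail : ∑ j ∈ Finset.range (p), Real.sqrt (∑ t ∈ blk (j+1), b t ^ 2)
      ≤ E1 / Real.sqrt K' := by
    calc ∑ j ∈ Finset.range (p), Real.sqrt (∑ t ∈ blk (j+1), b t ^ 2)
        ≤ ∑ j ∈ Finset.range (p), S j / Real.sqrt K' :=
          Finset.sum_le_sum fun j _ => hdecay j
      _ = (∑ j ∈ Finset.range (p), S j) / Real.sqrt K' := by rw [Finset.sum_div]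
      _ ≤ (∑ j ∈ Finset.range q, S j) / Real.sqrt K' := by
          gcongr
          exact Nat.le_succ p
      _ = E1 / Real.sqrt K' := by rw [hSsum]
  -- RIP bound for A
  have hAbound : mKK' * A ≤ 2*ε/M + MK' * (E1 / Real.sqrt K') := by
    have hlow := (hRIP2 v01 hsp_v01).1
    have hM1 : (0:ℝ) ≤ 1 / M := by positivity
    have step2 : (1/(M:ℝ)) * l1norm (B v01)
        ≤ (1/(M:ℝ)) * l1norm (B h)
          + ∑ j ∈ Finset.range (p), (1/(M:ℝ)) * l1norm (B (restr h (Tb (j+1)))) := by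
      rw [← Finset.mul_sum, ← mul_add]
      exact mul_le_mul_of_nonneg_left hl1Bv01 hM1
    have step3 : ∑ j ∈ Finset.range (p), (1/(M:ℝ)) * l1norm (B (restr h (Tb (j+1))))
        ≤ ∑ j ∈ Finset.range (p), MK' * Real.sqrt (∑ t ∈ blk (j+1), b t ^ 2) := by
      refine Finset.sum_le_sum fun j _ => ?_
      have hu := (hRIP1 _ (hsp_T (j+1))).2
      rwa [BPDNaux.l2norm_restr, hTb_sq] at hu
    have step4 : ∑ j ∈ Finset.range (p), MK' * Real.sqrt (∑ t ∈ blk (j+1), b t ^ 2)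
        ≤ MK' * (E1 / Real.sqrt K') := by
      rw [← Finset.mul_sum]
      exact mul_le_mul_of_nonneg_left htail (le_of_lt hMK'0)
    have step1 : (1/(M:ℝ)) * l1norm (B h) ≤ 2*ε/M := by
      calc (1/(M:ℝ)) * l1norm (B h) ≤ (1/(M:ℝ)) * (2*ε) :=
            mul_le_mul_of_nonneg_left htube hM1
        _ = 2*ε/M := by ring
    calc mKK' * A ≤ (1/(M:ℝ)) * l1norm (B v01) := hlow
      _ ≤ _ := step2
      _ ≤ 2*ε/M + MK' * (E1/Real.sqrt K') := by linarith
  -- the head bound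
  have hST0 : ∑ i ∈ T₀, |h i| ≤ Real.sqrt K * A := by
    have hsub : ∑ i ∈ T₀, h i ^ 2 ≤ ∑ i ∈ T₀ ∪ Tb 0, h i ^ 2 :=
      Finset.sum_le_sum_of_subset_of_nonneg Finset.subset_union_left
        (fun i _ _ => sq_nonneg _)
    calc ∑ i ∈ T₀, |h i|
        ≤ Real.sqrt T₀.card * Real.sqrt (∑ i ∈ T₀, h i ^ 2) :=
          BPDNaux.l1_le_sqrt_card_mul h T₀
      _ ≤ Real.sqrt K * A := by
          rw [hT₀card]
          refine mul_le_mul_of_nonneg_left ?_ (Real.sqrt_nonneg _)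
          rw [hA, hv01, BPDNaux.l2norm_restr]
          exact Real.sqrt_le_sqrt hsub
  set e0 := ∑ i ∈ T₀ᶜ, |f i| with he0
  have he00 : 0 ≤ e0 := Finset.sum_nonneg fun i _ => abs_nonneg _
  have he1 : E1 ≤ Real.sqrt K * A + 2 * e0 := by
    rw [hE1]; linarith
  -- sqrt facts
  set ρ := Real.sqrt ((K:ℝ)/(K':ℝ)) with hρ
  have hρ0 : 0 ≤ ρ := Real.sqrt_nonneg _
  have hsqrtdiv : Real.sqrt (K:ℝ) / Real.sqrt (K':ℝ) = ρ := by
    rw [hρ, Real.sqrt_div (by positivity : (0:ℝ) ≤ (K:ℝ))]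
  have hs20 : (0:ℝ) < Real.sqrt 2 := Real.sqrt_pos.mpr (by norm_num)
  have hs2 : (1:ℝ) ≤ Real.sqrt 2 := by
    rw [show (1:ℝ) = Real.sqrt 1 from (Real.sqrt_one).symm]
    exact Real.sqrt_le_sqrt (by norm_num)
  have hγρ : γ ≤ mKK' - MK' * ρ := by
    have h1 : (1/Real.sqrt 2) * mKK' ≤ mKK' := by
      have h12 : 1/Real.sqrt 2 ≤ 1 := by
        rw [div_le_one hs20]; exact hs2
      nlinarith
    rw [hρ]
    linarith
  -- E1/√K' bound
  have hE1div : E1/Real.sqrt K' ≤ ρ*A + 2*e0/Real.sqrt K' := by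
    calc E1 / Real.sqrt K' ≤ (Real.sqrt K * A + 2*e0)/Real.sqrt K' := by gcongr
      _ = (Real.sqrt K / Real.sqrt K') * A + 2*e0/Real.sqrt K' := by ring
      _ = ρ * A + 2*e0/Real.sqrt K' := by rw [hsqrtdiv]
  -- final bound for A
  have hγA : γ * A ≤ 2*ε/M + 2*MK'*e0/Real.sqrt K' := by
    have hmono : MK' * (E1 / Real.sqrt K') ≤ MK' * ρ * A + 2*MK'*e0/Real.sqrt K' := by
      calc MK' * (E1/Real.sqrt K') ≤ MK' * (ρ*A + 2*e0/Real.sqrt K') :=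
            mul_le_mul_of_nonneg_left hE1div (le_of_lt hMK'0)
        _ = MK' * ρ * A + 2*MK'*e0/Real.sqrt K' := by ring
    have hstep : (mKK' - MK' * ρ) * A ≤ 2*ε/M + 2*MK'*e0/Real.sqrt K' := by
      have hexp : (mKK' - MK'*ρ)*A = mKK'*A - MK'*ρ*A := by ring
      rw [hexp]
      linarith
    calc γ * A ≤ (mKK' - MK'*ρ) * A := mul_le_mul_of_nonneg_right hγρ hA0
      _ ≤ _ := hstep
  -- l2 split of h
  have hRsq : ∑ i ∈ (T₀ ∪ Tb 0)ᶜ, h i ^ 2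
      = ∑ j ∈ Finset.range (p), ∑ t ∈ blk (j+1), b t ^ 2 := by
    have hceq : (T₀ ∪ Tb 0)ᶜ = T₀ᶜ \ Tb 0 := by
      ext i
      simp only [Finset.mem_compl, Finset.mem_union, Finset.mem_sdiff]
      tauto
    rw [hceq, Finset.sum_sdiff_eq_sub (hTbsub 0)]
    have hall : ∑ i ∈ T₀ᶜ, h i ^ 2 = ∑ j ∈ Finset.range q, ∑ t ∈ blk j, b t ^ 2 := by
      rw [hsum_blocks (fun t => b t ^ 2)]
      rw [← hreindex (fun i => h i ^ 2)]
      exact (Finset.sum_congr rfl fun t _ => by rw [hb, sq_abs]).symm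
    rw [hall, hTb_sq 0]
    rw [← hq1, Finset.sum_range_succ' (fun j => ∑ t ∈ blk j, b t ^ 2) p]
    ring
  have hR : Real.sqrt (∑ i ∈ (T₀ ∪ Tb 0)ᶜ, h i ^ 2) ≤ E1 / Real.sqrt K' := by
    rw [hRsq]
    calc Real.sqrt (∑ j ∈ Finset.range (p), ∑ t ∈ blk (j+1), b t ^ 2)
        ≤ ∑ j ∈ Finset.range (p), Real.sqrt (∑ t ∈ blk (j+1), b t ^ 2) :=
          BPDNaux.sqrt_sum_le_sum_sqrt _ _
            (fun j _ => Finset.sum_nonneg fun t _ => sq_nonneg _)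
      _ ≤ E1 / Real.sqrt K' := htail
  have hl2h : l2norm h ≤ A + E1 / Real.sqrt K' := by
    have hsplit : ∑ i, h i ^ 2
        = ∑ i ∈ T₀ ∪ Tb 0, h i ^ 2 + ∑ i ∈ (T₀ ∪ Tb 0)ᶜ, h i ^ 2 :=
      (Finset.sum_add_sum_compl _ _).symm
    calc l2norm h
        = Real.sqrt (∑ i ∈ T₀ ∪ Tb 0, h i ^ 2 + ∑ i ∈ (T₀ ∪ Tb 0)ᶜ, h i ^ 2) := by
          rw [l2norm, hsplit]
      _ ≤ Real.sqrt (∑ i ∈ T₀ ∪ Tb 0, h i ^ 2)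
          + Real.sqrt (∑ i ∈ (T₀ ∪ Tb 0)ᶜ, h i ^ 2) :=
          BPDNaux.sqrt_add_le (Finset.sum_nonneg fun i _ => sq_nonneg _)
            (Finset.sum_nonneg fun i _ => sq_nonneg _)
      _ ≤ A + E1 / Real.sqrt K' := by
          refine add_le_add (le_of_eq ?_) hR
          rw [hA, hv01, BPDNaux.l2norm_restr]
  -- conclusion
  have hgoal_e0 : l1norm (restr f T₀ᶜ) = e0 := by
    rw [BPDNaux.l1norm_restr, he0]
  rw [hgoal_e0]
  have hfinal1 : l2norm h ≤ (1 + 1/Real.sqrt 2) * A + 2*e0/Real.sqrt K' := by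
    calc l2norm h ≤ A + E1/Real.sqrt K' := hl2h
      _ ≤ A + (ρ*A + 2*e0/Real.sqrt K') := by linarith
      _ ≤ A + ((1/Real.sqrt 2)*A + 2*e0/Real.sqrt K') := by
          have hρle : ρ ≤ 1 / Real.sqrt 2 := by
            rw [hρ]
            have h12 : (K:ℝ)/(K':ℝ) ≤ 1/2 := by
              rw [div_le_div_iff₀ hK'0 (by norm_num : (0:ℝ) < 2)]
              have hc : ((2*K : ℕ) : ℝ) ≤ (K' : ℝ) := by exact_mod_cast le_of_lt hKK'
              push_cast at hc
              linarith
            calc Real.sqrt ((K:ℝ)/(K':ℝ)) ≤ Real.sqrt (1/2) := Real.sqrt_le_sqrt h12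
              _ = 1 / Real.sqrt 2 := by
                rw [one_div, one_div, Real.sqrt_inv]
          nlinarith
      _ = (1 + 1/Real.sqrt 2) * A + 2*e0/Real.sqrt K' := by ring
  have hhalf : 1 + 1/Real.sqrt 2 = (2 + Real.sqrt 2)/2 := by
    have h2s : Real.sqrt 2 * Real.sqrt 2 = 2 := Real.mul_self_sqrt (by norm_num)
    field_simp
    linear_combination -h2s
  have hAle : A ≤ (2*ε/M + 2*MK'*e0/Real.sqrt K')/γ := by
    rw [le_div_iff₀ hγ]
    calc A * γ = γ * A := by ring
      _ ≤ _ := hγA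
  calc l2norm h ≤ (1 + 1/Real.sqrt 2) * A + 2*e0/Real.sqrt K' := hfinal1
    _ ≤ (1 + 1/Real.sqrt 2) * ((2*ε/M + 2*MK'*e0/Real.sqrt K')/γ) + 2*e0/Real.sqrt K' := by
        have h10 : (0:ℝ) ≤ 1 + 1/Real.sqrt 2 := by positivity
        have := mul_le_mul_of_nonneg_left hAle h10
        linarith
    _ = ((2 + Real.sqrt 2) * MK' / γ + 2) * (e0 / Real.sqrt K')
        + ((2 + Real.sqrt 2) / γ) * (ε / M) := by
        rw [hhalf]
        field_simp
        ring
end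

section
/- Let h ∈ ℝ^N, K' ≥ 1, and let T_1, T_2, … be pairwise disjoint subsets of [N] such that |T_i| = K' whenever T_{i+1} is nonempty, and such that for every i ≥ 1 and every j ∈ T_{i+1} one has |h_j| ≤ min_{l ∈ T_i} |h_l|. Then Σ_{i ≥ 2} ‖h_{T_i}‖₂ ≤ (1/√K') Σ_{i ≥ 1} ‖h_{T_i}‖₁; in particular, when the sets T_i (i ≥ 1) partition the complement of a set T_0, this bound equals ‖h_{T_0^c}‖₁ / √K'. -/
open Finset

lemma l1norm_restr {n : ℕ} (x : Fin n → ℝ) (S : Finset (Fin n)) :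
    l1norm (restr x S) = ∑ j ∈ S, |x j| := by
  simp [l1norm, restr, apply_ite abs, Finset.sum_ite_mem]

lemma l2norm_restr {n : ℕ} (x : Fin n → ℝ) (S : Finset (Fin n)) :
    l2norm (restr x S) = Real.sqrt (∑ j ∈ S, x j ^ 2) := by
  simp [l2norm, restr, apply_ite (· ^ 2), Finset.sum_ite_mem]

/-- **Block decomposition bound.** If `T_1, T_2, …` are pairwise disjoint subsets of
`[N]`, each of cardinality `K'` whenever the next one is nonempty, and every entry
of `h` on `T_{i+1}` is dominated in magnitude by every entry on `T_i`, then
`Σ_{i≥2} ‖h_{T_i}‖₂ ≤ (1/√K') Σ_{i≥1} ‖h_{T_i}‖₁`; when the `T_i` (`i ≥ 1`)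
partition the complement of `T₀`, the right-hand sum equals `‖h_{T₀ᶜ}‖₁`. -/
theorem block_tail_l2_bound
    {N : ℕ} (h : Fin N → ℝ) (K' : ℕ) (hK' : 1 ≤ K')
    (T : ℕ → Finset (Fin N))
    (hdisj : ∀ i j, 1 ≤ i → 1 ≤ j → i ≠ j → Disjoint (T i) (T j))
    (hcard : ∀ i, 1 ≤ i → (T (i + 1)).Nonempty → (T i).card = K')
    (hmag : ∀ i, 1 ≤ i → ∀ j ∈ T (i + 1), ∀ l ∈ T i, |h j| ≤ |h l|)
    (T₀ : Finset (Fin N)) :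
    (∑' i : ℕ, l2norm (restr h (T (i + 2))))
      ≤ (1 / Real.sqrt (K' : ℝ)) * ∑' i : ℕ, l1norm (restr h (T (i + 1)))
    ∧ ((∀ j : Fin N, j ∉ T₀ ↔ ∃ i, 1 ≤ i ∧ j ∈ T i) →
        (∑' i : ℕ, l1norm (restr h (T (i + 1)))) = l1norm (restr h T₀ᶜ)) := by
  set sK := Real.sqrt (K' : ℝ) with hsKdef
  have hK0 : (0:ℝ) < (K' : ℝ) := by exact_mod_cast hK'
  have hsK : 0 < sK := Real.sqrt_pos.mpr hK0
  have hs2 : sK * sK = (K' : ℝ) := Real.mul_self_sqrt hK0.le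
  set g : ℕ → ℝ := fun i => l1norm (restr h (T (i + 1))) with hgdef
  have hg0 : ∀ i, 0 ≤ g i := by
    intro i
    rw [hgdef]
    simp only [l1norm_restr]
    exact Finset.sum_nonneg fun j _ => abs_nonneg _
  -- downward nonemptiness
  have step : ∀ i, 1 ≤ i → (T (i + 1)).Nonempty → (T i).Nonempty := by
    intro i hi hne
    rw [← Finset.card_pos, hcard i hi hne]
    exact hK'
  have down : ∀ d i, 1 ≤ i → (T (i + d)).Nonempty → (T i).Nonempty := by
    intro d
    induction d with
    | zero => intro i _ hne; exact hne
    | succ d ih =>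
      intro i hi hne
      have : (T (i + d)).Nonempty := step (i + d) (by omega) hne
      exact ih i hi this
  -- nonempty blocks have index ≤ N
  have hne_le : ∀ i, 1 ≤ i → (T i).Nonempty → i ≤ N := by
    intro i hi hTi
    have hall : ∀ j ∈ Finset.Icc 1 i, (T j).Nonempty := by
      intro j hj
      simp only [Finset.mem_Icc] at hj
      have : j + (i - j) = i := by omega
      exact down (i - j) j hj.1 (by rwa [this])
    have hd : (↑(Finset.Icc 1 i) : Set ℕ).PairwiseDisjoint T := by
      intro a ha b hb hab
      simp only [Finset.coe_Icc, Set.mem_Icc] at ha hb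
      exact hdisj a b ha.1 hb.1 hab
    calc i = (Finset.Icc 1 i).card := by rw [Nat.card_Icc]; omega
      _ = ∑ j ∈ Finset.Icc 1 i, 1 := by simp
      _ ≤ ∑ j ∈ Finset.Icc 1 i, (T j).card :=
          Finset.sum_le_sum fun j hj => Finset.card_pos.mpr (hall j hj)
      _ = ((Finset.Icc 1 i).biUnion T).card := (Finset.card_biUnion hd).symm
      _ ≤ N := by simpa using Finset.card_le_univ ((Finset.Icc 1 i).biUnion T)
  have hempty : ∀ i, N < i → T i = ∅ := by
    intro i hi
    by_contra hc
    have := hne_le i (by omega) (Finset.nonempty_iff_ne_empty.mpr hc)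
    omega
  -- finite support
  have hfin1 : ∀ i ∉ Finset.range N, g i = 0 := by
    intro i hi
    simp only [Finset.mem_range, not_lt] at hi
    rw [hgdef]
    simp [l1norm_restr, hempty (i + 1) (by omega)]
  have hfin2 : ∀ i ∉ Finset.range N, l2norm (restr h (T (i + 2))) = 0 := by
    intro i hi
    simp only [Finset.mem_range, not_lt] at hi
    simp [l2norm_restr, hempty (i + 2) (by omega)]
  have htsum1 : (∑' i : ℕ, l1norm (restr h (T (i + 1)))) = ∑ i ∈ Finset.range N, g i :=
    tsum_eq_sum hfin1
  have htsum2 : (∑' i : ℕ, l2norm (restr h (T (i + 2)))) =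
      ∑ i ∈ Finset.range N, l2norm (restr h (T (i + 2))) := tsum_eq_sum hfin2
  -- key per-index bound
  have key : ∀ i : ℕ, l2norm (restr h (T (i + 2))) ≤ (1 / (2 * sK)) * (g i + g (i + 1)) := by
    intro i
    rcases Finset.eq_empty_or_nonempty (T (i + 2)) with he | hne2
    · rw [l2norm_restr, he]
      simp only [Finset.sum_empty, Real.sqrt_zero]
      have := hg0 i; have := hg0 (i+1)
      positivity
    · have hc : (T (i + 1)).card = K' := hcard (i + 1) (by omega) hne2
      have hT1ne : (T (i + 1)).Nonempty := by
        rw [← Finset.card_pos, hc]; exact hK'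
      set m := (T (i + 1)).inf' hT1ne (fun l => |h l|) with hmdef
      have hm0 : 0 ≤ m := Finset.le_inf' hT1ne _ fun l _ => abs_nonneg _
      have hKm : (K' : ℝ) * m ≤ g i := by
        have : (T (i + 1)).card • m ≤ ∑ j ∈ T (i + 1), |h j| :=
          Finset.card_nsmul_le_sum _ _ _ fun j hj => Finset.inf'_le _ hj
        rw [hc, nsmul_eq_mul] at this
        rw [hgdef]
        simpa [l1norm_restr] using this
      have hmj : ∀ j ∈ T (i + 2), |h j| ≤ m := by
        intro j hj
        exact Finset.le_inf' hT1ne _ fun l hl => hmag (i + 1) (by omega) j hj l hl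
      have hA : 0 ≤ g (i + 1) := hg0 (i + 1)
      have hgA : g (i + 1) = ∑ j ∈ T (i + 2), |h j| := by
        rw [hgdef]; simp [l1norm_restr]
      have hsq : ∑ j ∈ T (i + 2), h j ^ 2 ≤ m * g (i + 1) := by
        rw [hgA, Finset.mul_sum]
        refine Finset.sum_le_sum fun j hj => ?_
        rw [← sq_abs, sq]
        exact mul_le_mul_of_nonneg_right (hmj j hj) (abs_nonneg _)
      have hdiv : g (i + 1) / sK * sK = g (i + 1) := div_mul_cancel₀ _ hsK.ne'
      have amgm : Real.sqrt (m * g (i + 1)) ≤ (sK * m + g (i + 1) / sK) / 2 := by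
        have h1 : m * g (i + 1) ≤ ((sK * m + g (i + 1) / sK) / 2) ^ 2 := by
          nlinarith [sq_nonneg (sK * m - g (i + 1) / sK), hdiv]
        calc Real.sqrt (m * g (i + 1)) ≤ Real.sqrt (((sK * m + g (i + 1) / sK) / 2) ^ 2) :=
              Real.sqrt_le_sqrt h1
          _ = (sK * m + g (i + 1) / sK) / 2 := Real.sqrt_sq (by positivity)
      have hsKm : sK * m ≤ g i / sK := by
        rw [le_div_iff₀ hsK]
        nlinarith [hKm, hs2, hm0]
      have hl2 : l2norm (restr h (T (i + 2))) ≤ Real.sqrt (m * g (i + 1)) := by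
        rw [l2norm_restr]
        exact Real.sqrt_le_sqrt hsq
      have heq : (g i / sK + g (i + 1) / sK) / 2 = (1 / (2 * sK)) * (g i + g (i + 1)) := by
        rw [← add_div, div_div]
        ring
      linarith [hl2, amgm, hsKm]
  -- shifted sum bound
  have hshift : ∑ i ∈ Finset.range N, g (i + 1) ≤ ∑ i ∈ Finset.range N, g i := by
    have h1 : ∑ i ∈ Finset.range (N + 1), g i = (∑ i ∈ Finset.range N, g (i + 1)) + g 0 :=
      Finset.sum_range_succ' g N
    have h2 : ∑ i ∈ Finset.range (N + 1), g i = (∑ i ∈ Finset.range N, g i) + g N :=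
      Finset.sum_range_succ g N
    have hgN : g N = 0 := hfin1 N (by simp)
    have := hg0 0
    linarith
  constructor
  · rw [htsum1, htsum2]
    calc ∑ i ∈ Finset.range N, l2norm (restr h (T (i + 2)))
        ≤ ∑ i ∈ Finset.range N, (1 / (2 * sK)) * (g i + g (i + 1)) :=
          Finset.sum_le_sum fun i _ => key i
      _ = (1 / (2 * sK)) * ((∑ i ∈ Finset.range N, g i) + ∑ i ∈ Finset.range N, g (i + 1)) := by
          rw [← Finset.mul_sum, Finset.sum_add_distrib]
      _ ≤ (1 / (2 * sK)) * ((∑ i ∈ Finset.range N, g i) + ∑ i ∈ Finset.range N, g i) := by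
          apply mul_le_mul_of_nonneg_left _ (by positivity)
          linarith
      _ = (1 / sK) * ∑ i ∈ Finset.range N, g i := by
          field_simp
          ring
  · intro hpart
    rw [htsum1]
    have hd : (↑(Finset.range N) : Set ℕ).PairwiseDisjoint fun i => T (i + 1) := by
      intro a _ b _ hab
      exact hdisj (a + 1) (b + 1) (by omega) (by omega) (by omega)
    have hbU : (Finset.range N).biUnion (fun i => T (i + 1)) = T₀ᶜ := by
      ext j
      simp only [Finset.mem_biUnion, Finset.mem_range, Finset.mem_compl]
      constructor
      · rintro ⟨i, _, hji⟩
        exact (hpart j).mpr ⟨i + 1, by omega, hji⟩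
      · intro hj
        obtain ⟨i, hi1, hji⟩ := (hpart j).mp hj
        have hile : i ≤ N := hne_le i hi1 ⟨j, hji⟩
        refine ⟨i - 1, by omega, ?_⟩
        have : i - 1 + 1 = i := by omega
        rwa [this]
    calc ∑ i ∈ Finset.range N, g i = ∑ i ∈ Finset.range N, ∑ j ∈ T (i + 1), |h j| := by
          simp [hgdef, l1norm_restr]
      _ = ∑ j ∈ (Finset.range N).biUnion (fun i => T (i + 1)), |h j| :=
          (Finset.sum_biUnion hd).symm
      _ = l1norm (restr h T₀ᶜ) := by rw [hbU, l1norm_restr]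
end

section
/- Let f, h ∈ ℝ^N satisfy ‖f + h‖₁ ≤ ‖f‖₁, and let T_0 ⊆ [N] be any index set with |T_0| = K. Then ‖h_{T_0^c}‖₁ ≤ 2‖f_{T_0^c}‖₁ + ‖h_{T_0}‖₁ ≤ 2‖f_{T_0^c}‖₁ + √K·‖h_{T_0}‖₂. -/
open Finset

lemma l1_restr {n : ℕ} (x : Fin n → ℝ) (S : Finset (Fin n)) :
    l1norm (restr x S) = ∑ i ∈ S, |x i| := by
  simp [l1norm, restr, apply_ite abs, Finset.sum_ite_mem]

lemma l2_restr {n : ℕ} (x : Fin n → ℝ) (S : Finset (Fin n)) :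
    l2norm (restr x S) = Real.sqrt (∑ i ∈ S, x i ^ 2) := by
  simp [l2norm, restr, apply_ite (· ^ 2), Finset.sum_ite_mem]

/-- **Cone condition.** If `‖f + h‖₁ ≤ ‖f‖₁` and `T₀` has cardinality `K`, then
`‖h_{T₀ᶜ}‖₁ ≤ 2 ‖f_{T₀ᶜ}‖₁ + ‖h_{T₀}‖₁ ≤ 2 ‖f_{T₀ᶜ}‖₁ + √K ‖h_{T₀}‖₂`. -/
theorem cone_condition
    {N : ℕ} (f h : Fin N → ℝ)
    (hfh : l1norm (fun i => f i + h i) ≤ l1norm f)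
    (K : ℕ) (T₀ : Finset (Fin N)) (hT₀ : T₀.card = K) :
    l1norm (restr h T₀ᶜ) ≤ 2 * l1norm (restr f T₀ᶜ) + l1norm (restr h T₀)
    ∧ 2 * l1norm (restr f T₀ᶜ) + l1norm (restr h T₀)
        ≤ 2 * l1norm (restr f T₀ᶜ) + Real.sqrt (K : ℝ) * l2norm (restr h T₀) := by
  constructor
  · rw [l1_restr, l1_restr, l1_restr]
    have e1 : l1norm (fun i => f i + h i)
        = ∑ i ∈ T₀, |f i + h i| + ∑ i ∈ T₀ᶜ, |f i + h i| := by
      rw [l1norm, Finset.sum_add_sum_compl]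
    have e2 : l1norm f = ∑ i ∈ T₀, |f i| + ∑ i ∈ T₀ᶜ, |f i| := by
      rw [l1norm, Finset.sum_add_sum_compl]
    have b1 : ∑ i ∈ T₀, (|f i| - |h i|) ≤ ∑ i ∈ T₀, |f i + h i| := by
      apply Finset.sum_le_sum
      intro i _
      have := abs_sub_abs_le_abs_sub (f i) (-h i)
      simpa using this
    have b2 : ∑ i ∈ T₀ᶜ, (|h i| - |f i|) ≤ ∑ i ∈ T₀ᶜ, |f i + h i| := by
      apply Finset.sum_le_sum
      intro i _
      have := abs_sub_abs_le_abs_sub (h i) (-f i)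
      have e : f i + h i = h i - -f i := by ring
      simpa [e] using this
    rw [Finset.sum_sub_distrib] at b1 b2
    rw [e1, e2] at hfh
    linarith
  · rw [l1_restr, l1_restr, l2_restr]
    have key : (∑ i ∈ T₀, |h i|) ^ 2 ≤ (K : ℝ) * ∑ i ∈ T₀, h i ^ 2 := by
      have := sq_sum_le_card_mul_sum_sq (s := T₀) (f := fun i => |h i|)
      simpa [hT₀, sq_abs] using this
    have h1 : ∑ i ∈ T₀, |h i| ≤ Real.sqrt ((K : ℝ) * ∑ i ∈ T₀, h i ^ 2) := by
      have hn : (0:ℝ) ≤ ∑ i ∈ T₀, |h i| := Finset.sum_nonneg fun i _ => abs_nonneg _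
      calc ∑ i ∈ T₀, |h i| = Real.sqrt ((∑ i ∈ T₀, |h i|) ^ 2) := by
              rw [Real.sqrt_sq hn]
        _ ≤ _ := Real.sqrt_le_sqrt key
    rw [Real.sqrt_mul (by positivity)] at h1
    linarith
end

section
/- Let α ∈ ℂ^Q be a random vector with i.i.d. components distributed as a complex random variable α₀ with E α₀ = 0, E α₀² = 0, E |α₀|² = μ₂ and E |α₀|⁴ = μ₄ < ∞. Then for every Hermitian matrix I ∈ ℂ^{Q×Q}, E[(α^* I α) · α α^*] = μ₂² · I + (μ₄ − 2μ₂²) · I_d + μ₂² · tr(I) · Id_Q, where I_d is the diagonal part of I. In particular, if I is hollow, then E[(α^* I α) · α α^*] = μ₂² · I. -/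
open MeasureTheory ProbabilityTheory Matrix

/-- conj-power times power -/
noncomputable def sropPhi (a b : ℕ) (x : ℂ) : ℂ := (starRingEnd ℂ x) ^ a * x ^ b

lemma sropPhi_meas (a b : ℕ) : Measurable (sropPhi a b) := by
  unfold sropPhi
  exact ((Complex.continuous_conj.measurable).pow_const a).mul (measurable_id.pow_const b)

lemma iIndepFun_congr {Ω : Type*} [MeasurableSpace Ω] {μ : Measure Ω} {ι : Type*}
    {β : ι → Type*} [m : ∀ i, MeasurableSpace (β i)] {f g : ∀ i, Ω → β i}
    (h : iIndepFun f μ) (heq : ∀ i, f i =ᵐ[μ] g i) : iIndepFun g μ := by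
  rw [iIndepFun_iff_measure_inter_preimage_eq_mul] at h ⊢
  intro S sets hsets
  have h1 : ∀ i, i ∈ S → μ (f i ⁻¹' sets i) = μ (g i ⁻¹' sets i) := by
    intro i _
    apply measure_congr
    rw [Filter.eventuallyEq_set]
    filter_upwards [heq i] with ω hω
    simp [Set.mem_preimage, hω]
  have h2 : μ (⋂ i ∈ S, f i ⁻¹' sets i) = μ (⋂ i ∈ S, g i ⁻¹' sets i) := by
    apply measure_congr
    rw [Filter.eventuallyEq_set]
    have hall : ∀ᵐ ω ∂μ, ∀ i ∈ (↑S : Set ι), f i ω = g i ω :=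
      (ae_ball_iff S.countable_toSet).mpr (fun i _ => heq i)
    filter_upwards [hall] with ω hω
    simp only [Set.mem_iInter, Set.mem_preimage]
    exact ⟨fun H i hi => by rw [← hω i (Finset.mem_coe.2 hi)]; exact H i hi,
           fun H i hi => by rw [hω i (Finset.mem_coe.2 hi)]; exact H i hi⟩
  rw [← h2, h S hsets]
  exact Finset.prod_congr rfl h1

lemma srop_integral_mul {Ω : Type*} [MeasurableSpace Ω] {μ : Measure Ω}
    [IsProbabilityMeasure μ] {X Y : Ω → ℂ} (h : IndepFun X Y μ)
    (hX : AEMeasurable X μ) (hY : AEMeasurable Y μ) :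
    ∫ ω, X ω * Y ω ∂μ = (∫ ω, X ω ∂μ) * ∫ ω, Y ω ∂μ := by
  have hmap := (indepFun_iff_map_prod_eq_prod_map_map hX hY).1 h
  have h1 : ∫ ω, X ω * Y ω ∂μ = ∫ p : ℂ × ℂ, p.1 * p.2 ∂(μ.map (fun ω => (X ω, Y ω))) := by
    rw [integral_map (hX.prodMk hY)]
    exact (measurable_fst.mul measurable_snd).aestronglyMeasurable
  have : IsProbabilityMeasure (μ.map X) := Measure.isProbabilityMeasure_map hX
  have : IsProbabilityMeasure (μ.map Y) := Measure.isProbabilityMeasure_map hY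
  have hIX : ∫ x : ℂ, x ∂(μ.map X) = ∫ ω, X ω ∂μ :=
    integral_map hX aestronglyMeasurable_id
  have hIY : ∫ y : ℂ, y ∂(μ.map Y) = ∫ ω, Y ω ∂μ :=
    integral_map hY aestronglyMeasurable_id
  rw [h1, hmap, integral_prod_mul (fun x : ℂ => x) (fun y : ℂ => y), hIX, hIY]

lemma srop_prod_int {Ω : Type*} [MeasurableSpace Ω] {μ : Measure Ω} [IsProbabilityMeasure μ]
    {ι : Type*} [DecidableEq ι] {g : ι → Ω → ℂ}
    (hindep : iIndepFun g μ) (hmeas : ∀ i, Measurable (g i))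
    (hint : ∀ i, Integrable (g i) μ) (s : Finset ι) :
    Integrable (fun ω => ∏ k ∈ s, g k ω) μ ∧
      ∫ ω, ∏ k ∈ s, g k ω ∂μ = ∏ k ∈ s, ∫ ω, g k ω ∂μ := by
  induction s using Finset.induction_on with
  | empty => simp
  | insert k s hk ih =>
    have hi : IndepFun (∏ j ∈ s, g j) (g k) μ :=
      hindep.indepFun_finsetProd_of_notMem hmeas hk
    have hps : (∏ j ∈ s, g j) = fun ω => ∏ j ∈ s, g j ω := by
      funext ω; simp [Finset.prod_apply]
    have hint1 : Integrable ((∏ j ∈ s, g j) * g k) μ :=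
      hi.integrable_mul (by rw [hps]; exact ih.1) (hint k)
    constructor
    · apply hint1.congr
      filter_upwards with ω
      simp [Finset.prod_insert hk, Finset.prod_apply, mul_comm]
    · have := srop_integral_mul hi (by rw [hps]; exact ih.1.aemeasurable) (hint k).aemeasurable
      simp only [Finset.prod_apply] at this
      rw [Finset.prod_insert hk, ← ih.2]
      calc ∫ ω, ∏ j ∈ insert k s, g j ω ∂μ
          = ∫ ω, (∏ j ∈ s, g j ω) * g k ω ∂μ := by
            apply integral_congr_ae; filter_upwards with ω
            rw [Finset.prod_insert hk, mul_comm]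
        _ = (∫ ω, ∏ j ∈ s, g j ω ∂μ) * ∫ ω, g k ω ∂μ := this
        _ = (∫ ω, g k ω ∂μ) * ∫ ω, ∏ j ∈ s, g j ω ∂μ := mul_comm _ _

lemma srop_prod_pow_ind {ι : Type*} [Fintype ι] [DecidableEq ι] (x : ι → ℂ) (i : ι) :
    (∏ n, x n ^ (if n = i then 1 else 0)) = x i := by
  simp [pow_ite, Finset.prod_ite_eq']

lemma srop_fourth_moment {Ω : Type*} [MeasurableSpace Ω] {μ : Measure Ω} [IsProbabilityMeasure μ]
    {Q : ℕ} (B : Fin Q → Ω → ℂ) (hBm : ∀ k, Measurable (B k))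
    (hBindep : iIndepFun B μ)
    (Mo : ℕ → ℕ → ℂ)
    (hint : ∀ n a b, a + b ≤ 4 → Integrable (fun ω => sropPhi a b (B n ω)) μ)
    (hval : ∀ n a b, a + b ≤ 4 → ∫ ω, sropPhi a b (B n ω) ∂μ = Mo a b)
    (h00 : Mo 0 0 = 1) (h10 : Mo 1 0 = 0) (h01 : Mo 0 1 = 0)
    (h20 : Mo 2 0 = 0) (h02 : Mo 0 2 = 0)
    (i j k l : Fin Q) :
    Integrable (fun ω => (starRingEnd ℂ (B i ω)) * B j ω * B k ω * starRingEnd ℂ (B l ω)) μ ∧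
    ∫ ω, (starRingEnd ℂ (B i ω)) * B j ω * B k ω * starRingEnd ℂ (B l ω) ∂μ
      = (if i = j ∧ k = l then Mo 1 1 ^ 2 else 0) + (if i = k ∧ j = l then Mo 1 1 ^ 2 else 0)
        + (if i = j ∧ k = l ∧ i = k then (Mo 2 2 - 2 * Mo 1 1 ^ 2) else 0) := by
  classical
  set a : Fin Q → ℕ := fun n => (if n = i then 1 else 0) + (if n = l then 1 else 0) with ha
  set b : Fin Q → ℕ := fun n => (if n = j then 1 else 0) + (if n = k then 1 else 0) with hb
  have hab : ∀ n, a n + b n ≤ 4 := by intro n; simp only [ha, hb]; split_ifs <;> omega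
  have hpt : ∀ x : Fin Q → ℂ, (∏ n, sropPhi (a n) (b n) (x n)) =
      (starRingEnd ℂ (x i)) * x j * x k * starRingEnd ℂ (x l) := by
    intro x
    have hstep : ∀ n, sropPhi (a n) (b n) (x n) =
        ((starRingEnd ℂ (x n)) ^ (if n = i then 1 else 0) *
          (starRingEnd ℂ (x n)) ^ (if n = l then 1 else 0)) *
        ((x n) ^ (if n = j then 1 else 0) * (x n) ^ (if n = k then 1 else 0)) := by
      intro n; simp only [sropPhi, ha, hb, pow_add]
    rw [Finset.prod_congr rfl (fun n _ => hstep n), Finset.prod_mul_distrib,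
      Finset.prod_mul_distrib, Finset.prod_mul_distrib,
      srop_prod_pow_ind (fun n => starRingEnd ℂ (x n)) i,
      srop_prod_pow_ind (fun n => starRingEnd ℂ (x n)) l,
      srop_prod_pow_ind x j, srop_prod_pow_ind x k]
    ring
  have hg : iIndepFun
      (fun n => (sropPhi (a n) (b n)) ∘ (B n)) μ :=
    hBindep.comp (fun n => sropPhi (a n) (b n)) (fun n => sropPhi_meas _ _)
  obtain ⟨hI, hV⟩ := srop_prod_int hg (fun n => (sropPhi_meas _ _).comp (hBm n))
    (fun n => hint n _ _ (hab n)) Finset.univ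
  constructor
  · apply hI.congr
    filter_upwards with ω
    exact hpt (fun n => B n ω)
  · have hmain : ∫ ω, (starRingEnd ℂ (B i ω)) * B j ω * B k ω * starRingEnd ℂ (B l ω) ∂μ
        = ∏ n, Mo (a n) (b n) := by
      rw [show (fun ω => (starRingEnd ℂ (B i ω)) * B j ω * B k ω * starRingEnd ℂ (B l ω))
          = fun ω => ∏ n, ((sropPhi (a n) (b n)) ∘ (B n)) ω from
        funext fun ω => (hpt (fun n => B n ω)).symm]
      rw [hV]
      exact Finset.prod_congr rfl (fun n _ => hval n _ _ (hab n))
    rw [hmain]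
    by_cases h1 : i = j ∧ k = l
    · obtain ⟨rfl, rfl⟩ := h1
      by_cases h2 : i = k
      · subst h2
        have hzz : ∀ n, Mo (a n) (b n) = if n = i then Mo 2 2 else 1 := by
          intro n; by_cases hn : n = i <;> simp [ha, hb, hn, h00]
        rw [Finset.prod_congr rfl (fun n _ => hzz n), Finset.prod_ite_eq']
        simp only [Finset.mem_univ, if_true]
        split_ifs <;> first | ring1 | tauto
      · have hzz : ∀ n, Mo (a n) (b n) =
            (if n = i then Mo 1 1 else 1) * (if n = k then Mo 1 1 else 1) := by
          intro n
          by_cases hn : n = i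
          · subst hn; simp [ha, hb, h2]
          · by_cases hn2 : n = k
            · subst hn2; simp [ha, hb, hn]
            · simp [ha, hb, hn, hn2, h00]
        rw [Finset.prod_congr rfl (fun n _ => hzz n), Finset.prod_mul_distrib,
          Finset.prod_ite_eq', Finset.prod_ite_eq']
        simp only [Finset.mem_univ, if_true]
        split_ifs <;> first | ring1 | tauto
    · by_cases h2 : i = k ∧ j = l
      · obtain ⟨rfl, rfl⟩ := h2
        have hij : i ≠ j := fun hcon => h1 ⟨hcon, hcon⟩
        have hzz : ∀ n, Mo (a n) (b n) =
            (if n = i then Mo 1 1 else 1) * (if n = j then Mo 1 1 else 1) := by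
          intro n
          by_cases hn : n = i
          · subst hn; simp [ha, hb, hij]
          · by_cases hn2 : n = j
            · subst hn2; simp [ha, hb, hn, Ne.symm hij]
            · simp [ha, hb, hn, hn2, h00]
        rw [Finset.prod_congr rfl (fun n _ => hzz n), Finset.prod_mul_distrib,
          Finset.prod_ite_eq', Finset.prod_ite_eq']
        simp only [Finset.mem_univ, if_true]
        split_ifs <;> first | ring1 | tauto
      · have hz : ∃ n₀, Mo (a n₀) (b n₀) = 0 := by
          by_cases hij : i = j
          · subst hij
            have hkl : k ≠ l := fun hcon => h1 ⟨rfl, hcon⟩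
            by_cases hli : l = i
            · refine ⟨k, ?_⟩
              have hki : k ≠ i := fun hcon => hkl (hcon.trans hli.symm)
              simp [ha, hb, hki, hkl, h01]
            · refine ⟨l, ?_⟩
              have hlk : l ≠ k := fun hcon => hkl hcon.symm
              simp [ha, hb, hli, hlk, h10]
          · by_cases hik : i = k
            · subst hik
              have hjl : j ≠ l := fun hcon => h2 ⟨rfl, hcon⟩
              refine ⟨j, ?_⟩
              simp [ha, hb, Ne.symm hij, hjl, h01]
            · by_cases hil : i = l
              · refine ⟨i, ?_⟩
                simp [ha, hb, hij, hik, ← hil, h20]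
              · refine ⟨i, ?_⟩
                simp [ha, hb, hij, hik, hil, h10]
        obtain ⟨n₀, hn₀⟩ := hz
        rw [Finset.prod_eq_zero (Finset.mem_univ n₀) hn₀]
        split_ifs <;> first | ring1 | tauto


/-- **Anisotropy of the SROP operator** (Lemma 1, second part).
If the components of `α` are i.i.d. copies of a complex random variable `α₀`
with `E α₀ = 0`, `E α₀² = 0`, `E|α₀|² = μ₂` and `E|α₀|⁴ = μ₄ < ∞`, then for
every Hermitian `I`,
`E[(α^* I α) αα^*] = μ₂² I + (μ₄ − 2μ₂²) I_d + μ₂² (tr I) Id`; in particular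
if `I` is hollow then `E[(α^* I α) αα^*] = μ₂² I`. -/
theorem srop_anisotropy
    {Ω : Type*} [MeasurableSpace Ω] (μ : Measure Ω) [IsProbabilityMeasure μ]
    {Q : ℕ} (α : Ω → Fin Q → ℂ) (α₀ : Ω → ℂ) (μ₂ μ₄ : ℝ)
    (hindep : iIndepFun (fun q ω => α ω q) μ)
    (hident : ∀ q : Fin Q, IdentDistrib (fun ω => α ω q) α₀ μ μ)
    (hmean : ∫ ω, α₀ ω ∂μ = 0)
    (hsq : ∫ ω, (α₀ ω) ^ 2 ∂μ = 0)
    (hL4 : Integrable (fun ω => ‖α₀ ω‖ ^ 4) μ)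
    (hmom2 : ∫ ω, ‖α₀ ω‖ ^ 2 ∂μ = μ₂)
    (hmom4 : ∫ ω, ‖α₀ ω‖ ^ 4 ∂μ = μ₄)
    (I : Matrix (Fin Q) (Fin Q) ℂ) (hI : I.IsHermitian) :
    ((Matrix.of fun q r : Fin Q =>
        ∫ ω, (dotProduct (star (α ω)) (I *ᵥ α ω)) * (α ω q * (starRingEnd ℂ) (α ω r)) ∂μ)
      = ((μ₂ : ℂ) ^ 2) • I
        + (((μ₄ : ℂ) - 2 * (μ₂ : ℂ) ^ 2)) • Matrix.diagonal (fun i => I i i)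
        + (((μ₂ : ℂ) ^ 2) * I.trace) • (1 : Matrix (Fin Q) (Fin Q) ℂ))
    ∧ ((∀ q, I q q = 0) →
        (Matrix.of fun q r : Fin Q =>
          ∫ ω, (dotProduct (star (α ω)) (I *ᵥ α ω)) * (α ω q * (starRingEnd ℂ) (α ω r)) ∂μ)
        = ((μ₂ : ℂ) ^ 2) • I) := by
  classical
  rcases Nat.eq_zero_or_pos Q with hQ | hQ
  · subst hQ
    constructor
    · ext p r; exact p.elim0
    · intro _; ext p r; exact p.elim0
  -- measurable modifications
  have hα : ∀ k : Fin Q, AEMeasurable (fun ω => α ω k) μ := fun k => (hident k).aemeasurable_fst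
  set B : Fin Q → Ω → ℂ := fun k => (hα k).mk (fun ω => α ω k) with hBdef
  have hBm : ∀ k, Measurable (B k) := fun k => (hα k).measurable_mk
  have hBe : ∀ k, (fun ω => α ω k) =ᵐ[μ] B k := fun k => (hα k).ae_eq_mk
  have hBindep : iIndepFun B μ := iIndepFun_congr hindep hBe
  have hBid : ∀ k, IdentDistrib (B k) α₀ μ μ :=
    fun k => ((IdentDistrib.of_ae_eq (hα k) (hBe k)).symm.trans (hident k))
  have hα₀ : AEMeasurable α₀ μ := (hident ⟨0, hQ⟩).aemeasurable_snd
  -- integrability of moments of α₀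
  have hbound : ∀ (a b : ℕ), a + b ≤ 4 → ∀ z : ℂ, ‖sropPhi a b z‖ ≤ 1 + ‖z‖ ^ 4 := by
    intro a b hab z
    have h1 : ‖sropPhi a b z‖ = ‖z‖ ^ (a + b) := by
      simp [sropPhi, _root_.map_mul, _root_.map_pow, Complex.norm_conj, pow_add]
    rw [h1]
    rcases le_total (‖z‖) 1 with h | h
    · calc ‖z‖ ^ (a + b) ≤ 1 := pow_le_one₀ (norm_nonneg z) h
        _ ≤ 1 + ‖z‖ ^ 4 := le_add_of_nonneg_right (by positivity)
    · calc ‖z‖ ^ (a + b) ≤ ‖z‖ ^ 4 := pow_le_pow_right₀ h hab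
        _ ≤ 1 + ‖z‖ ^ 4 := le_add_of_nonneg_left zero_le_one
  have hphiInt : ∀ a b : ℕ, a + b ≤ 4 → Integrable (fun ω => sropPhi a b (α₀ ω)) μ := by
    intro a b hab
    have hm : AEStronglyMeasurable (fun ω => sropPhi a b (α₀ ω)) μ :=
      ((sropPhi_meas a b).comp_aemeasurable hα₀).aestronglyMeasurable
    refine Integrable.mono' ((integrable_const (1 : ℝ)).add hL4) hm ?_
    filter_upwards with ω
    exact hbound a b hab _
  set Mo : ℕ → ℕ → ℂ := fun a b => ∫ ω, sropPhi a b (α₀ ω) ∂μ with hMo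
  have hint4 : ∀ (n : Fin Q) (a b : ℕ), a + b ≤ 4 → Integrable (fun ω => sropPhi a b (B n ω)) μ :=
    fun n a b h => (((hBid n).comp (sropPhi_meas a b)).integrable_iff).2 (hphiInt a b h)
  have hval4 : ∀ (n : Fin Q) (a b : ℕ), a + b ≤ 4 →
      ∫ ω, sropPhi a b (B n ω) ∂μ = Mo a b :=
    fun n a b _ => ((hBid n).comp (sropPhi_meas a b)).integral_eq
  -- moment values
  have m00 : Mo 0 0 = 1 := by simp [hMo, sropPhi]
  have m01 : Mo 0 1 = 0 := by
    simp only [hMo, sropPhi, pow_zero, one_mul, pow_one]; exact hmean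
  have m10 : Mo 1 0 = 0 := by
    simp only [hMo, sropPhi, pow_one, pow_zero, mul_one]
    rw [integral_conj, hmean, map_zero]
  have m02 : Mo 0 2 = 0 := by
    simp only [hMo, sropPhi, pow_zero, one_mul]; exact hsq
  have m20 : Mo 2 0 = 0 := by
    simp only [hMo, sropPhi, pow_zero, mul_one]
    have h2 : ∀ z : ℂ, (starRingEnd ℂ z) ^ 2 = starRingEnd ℂ (z ^ 2) :=
      fun z => (map_pow (starRingEnd ℂ) z 2).symm
    simp_rw [h2]
    rw [integral_conj, hsq, map_zero]
  have m11 : Mo 1 1 = (μ₂ : ℂ) := by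
    have h2 : ∀ z : ℂ, sropPhi 1 1 z = ((‖z‖ ^ 2 : ℝ) : ℂ) := by
      intro z
      rw [show ((‖z‖ ^ 2 : ℝ) : ℂ) = (Complex.normSq z : ℂ) by
        rw [Complex.normSq_eq_norm_sq]]
      simp only [sropPhi, pow_one]
      rw [mul_comm, Complex.mul_conj]
    simp only [hMo, h2]
    rw [show (∫ ω, ((‖α₀ ω‖ ^ 2 : ℝ) : ℂ) ∂μ)
        = ((∫ ω, ‖α₀ ω‖ ^ 2 ∂μ : ℝ) : ℂ) from integral_ofReal, hmom2]
  have m22 : Mo 2 2 = (μ₄ : ℂ) := by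
    have h2 : ∀ z : ℂ, sropPhi 2 2 z = ((‖z‖ ^ 4 : ℝ) : ℂ) := by
      intro z
      have e1 : sropPhi 2 2 z = (z * starRingEnd ℂ z) ^ 2 := by
        simp only [sropPhi]; ring
      rw [e1, Complex.mul_conj, show ((‖z‖ ^ 4 : ℝ) : ℂ)
        = ((Complex.normSq z : ℝ) : ℂ) ^ 2 by rw [Complex.normSq_eq_norm_sq]; push_cast; ring]
    simp only [hMo, h2]
    rw [show (∫ ω, ((‖α₀ ω‖ ^ 4 : ℝ) : ℂ) ∂μ)
        = ((∫ ω, ‖α₀ ω‖ ^ 4 ∂μ : ℝ) : ℂ) from integral_ofReal, hmom4]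
  have hT4 := fun i j p r => srop_fourth_moment B hBm hBindep Mo hint4 hval4 m00 m10 m01 m20 m02 i j p r
  -- entrywise computation
  have entry : ∀ p r : Fin Q,
      ∫ ω, (dotProduct (star (α ω)) (I *ᵥ α ω)) * (α ω p * (starRingEnd ℂ) (α ω r)) ∂μ
      = ∑ i, ∑ j, I i j *
          ((if i = j ∧ p = r then (μ₂ : ℂ) ^ 2 else 0)
            + (if i = p ∧ j = r then (μ₂ : ℂ) ^ 2 else 0)
            + (if i = j ∧ p = r ∧ i = p then ((μ₄ : ℂ) - 2 * (μ₂ : ℂ) ^ 2) else 0)) := by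
    intro p r
    have hae : ∀ᵐ ω ∂μ, ∀ k, α ω k = B k ω := ae_all_iff.2 hBe
    have hrw : (fun ω => (dotProduct (star (α ω)) (I *ᵥ α ω)) * (α ω p * (starRingEnd ℂ) (α ω r)))
        =ᵐ[μ] (fun ω => ∑ i, ∑ j, I i j *
          ((starRingEnd ℂ (B i ω)) * B j ω * B p ω * starRingEnd ℂ (B r ω))) := by
      filter_upwards [hae] with ω hω
      simp only [dotProduct, Matrix.mulVec, Pi.star_apply, Complex.star_def, hω]
      rw [Finset.sum_mul]
      refine Finset.sum_congr rfl (fun i _ => ?_)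
      rw [Finset.mul_sum, Finset.sum_mul]
      refine Finset.sum_congr rfl (fun j _ => ?_)
      ring
    rw [integral_congr_ae hrw,
      integral_finset_sum _ (fun i _ => integrable_finset_sum _
        (fun j _ => ((hT4 i j p r).1.const_mul (I i j))))]
    refine Finset.sum_congr rfl (fun i _ => ?_)
    rw [integral_finset_sum _ (fun j _ => ((hT4 i j p r).1.const_mul (I i j)))]
    refine Finset.sum_congr rfl (fun j _ => ?_)
    rw [integral_const_mul, (hT4 i j p r).2, m11, m22]
  have entry2 : ∀ p r : Fin Q,
      (∑ i, ∑ j, I i j *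
          ((if i = j ∧ p = r then (μ₂ : ℂ) ^ 2 else 0)
            + (if i = p ∧ j = r then (μ₂ : ℂ) ^ 2 else 0)
            + (if i = j ∧ p = r ∧ i = p then ((μ₄ : ℂ) - 2 * (μ₂ : ℂ) ^ 2) else 0)))
      = (μ₂ : ℂ) ^ 2 * I p r
        + (if p = r then ((μ₄ : ℂ) - 2 * (μ₂ : ℂ) ^ 2) * I p p + (μ₂ : ℂ) ^ 2 * I.trace
            else 0) := by
    intro p r
    by_cases hpr : p = r
    · subst hpr
      simp only [and_true, eq_self_iff_true, if_true, true_and, mul_add, Finset.sum_add_distrib,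
        mul_ite, mul_zero, ite_and, Finset.sum_ite_eq, Finset.sum_ite_eq', Finset.mem_univ,
        if_true, Matrix.trace, Matrix.diag, Finset.sum_ite_irrel, Finset.sum_const_zero]
      have hcomm : ∑ x : Fin Q, I x x * (μ₂ : ℂ) ^ 2 = ∑ i : Fin Q, (μ₂ : ℂ) ^ 2 * I i i :=
        Finset.sum_congr rfl (fun i _ => mul_comm _ _)
      rw [hcomm, Finset.mul_sum]
      ring
    · simp only [hpr, and_false, false_and, if_false, mul_zero, mul_add, mul_ite,
        Finset.sum_add_distrib, Finset.sum_const_zero, ite_and, Finset.sum_ite_eq,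
        Finset.sum_ite_eq', Finset.mem_univ, if_true, add_zero, zero_add]
      have hin : ∀ x : Fin Q,
          (∑ y : Fin Q, if x = p then (if y = r then I x y * (μ₂ : ℂ) ^ 2 else 0) else 0)
            = if x = p then I x r * (μ₂ : ℂ) ^ 2 else 0 := by
        intro x; by_cases hx : x = p <;> simp [hx]
      rw [Finset.sum_congr rfl (fun x _ => hin x)]
      simp only [Finset.sum_ite_eq', Finset.mem_univ, if_true]
      ring
  constructor
  · ext p r
    rw [Matrix.of_apply, entry p r, entry2 p r]
    simp only [Matrix.add_apply, Matrix.smul_apply, Matrix.diagonal_apply, Matrix.one_apply,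
      smul_eq_mul]
    by_cases hpr : p = r
    · subst hpr; simp; ring
    · simp [hpr]
  · intro hholl
    have htr : I.trace = 0 := by simp [Matrix.trace, Matrix.diag, hholl]
    ext p r
    rw [Matrix.of_apply, entry p r, entry2 p r]
    simp only [Matrix.smul_apply, smul_eq_mul]
    by_cases hpr : p = r
    · subst hpr; simp [hholl p, htr]
    · simp [hpr]
end

section
/- Let B : ℝ^N → ℝ^M be a linear map, K ≤ N, 0 < λ < 1/2, and a, b ≥ 0. Let G be a set of unit-norm K-sparse vectors such that for every unit-norm K-sparse f ∈ ℝ^N there exists f' ∈ G with supp(f') ⊆ supp(f) and ‖f − f'‖₂ ≤ λ. If a ≤ (1/M)·‖B(f')‖₁ ≤ b for every f' ∈ G, then for every unit-norm K-sparse f ∈ ℝ^N, a − λ·b/(1−λ) ≤ (1/M)·‖B(f)‖₁ ≤ b/(1−λ). -/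
open Finset

lemma l1_nonneg {n : ℕ} (x : Fin n → ℝ) : 0 ≤ l1norm x :=
  Finset.sum_nonneg fun i _ => abs_nonneg _

lemma l1_add {n : ℕ} (x y : Fin n → ℝ) : l1norm (x + y) ≤ l1norm x + l1norm y := by
  simp only [l1norm, ← Finset.sum_add_distrib]
  exact Finset.sum_le_sum fun i _ => abs_add_le _ _

lemma l1_smul {n : ℕ} (c : ℝ) (x : Fin n → ℝ) : l1norm (c • x) = |c| * l1norm x := by
  simp [l1norm, abs_mul, Finset.mul_sum]

lemma l2_smul {n : ℕ} (c : ℝ) (x : Fin n → ℝ) : l2norm (c • x) = |c| * l2norm x := by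
  simp only [l2norm, Pi.smul_apply, smul_eq_mul, mul_pow, ← Finset.mul_sum]
  rw [Real.sqrt_mul (sq_nonneg c), Real.sqrt_sq_eq_abs]

lemma l2_eq_zero {n : ℕ} {x : Fin n → ℝ} (h : l2norm x = 0) : x = 0 := by
  have hs : ∑ i, x i ^ 2 = 0 :=
    le_antisymm (Real.sqrt_eq_zero'.mp h) (Finset.sum_nonneg fun i _ => sq_nonneg _)
  funext i
  have := (Finset.sum_eq_zero_iff_of_nonneg (fun i _ => sq_nonneg (x i))).mp hs i (Finset.mem_univ i)
  exact pow_eq_zero_iff (by norm_num) |>.mp this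

lemma l1_sum {n m : ℕ} (s : Finset (Fin m)) (h : Fin m → Fin n → ℝ) :
    l1norm (∑ i ∈ s, h i) ≤ ∑ i ∈ s, l1norm (h i) := by
  simp only [l1norm]
  rw [Finset.sum_comm]
  refine Finset.sum_le_sum fun j _ => ?_
  rw [Finset.sum_apply]
  exact Finset.abs_sum_le_sum_abs _ _

lemma l1_neg {n : ℕ} (x : Fin n → ℝ) : l1norm (-x) = l1norm x := by
  simp [l1norm]

lemma abs_le_l2 {n : ℕ} (x : Fin n → ℝ) (i : Fin n) : |x i| ≤ l2norm x := by
  rw [← Real.sqrt_sq_eq_abs]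
  exact Real.sqrt_le_sqrt (Finset.single_le_sum (fun j _ => sq_nonneg (x j)) (Finset.mem_univ i))

/-- **Net-extension step.** If a `λ`-covering `G` (with matching supports) of
the unit-norm `K`-sparse vectors satisfies `a ≤ (1/M)‖B f'‖₁ ≤ b` for all
`f' ∈ G`, then every unit-norm `K`-sparse `f` satisfies
`a − λ b/(1−λ) ≤ (1/M)‖B f‖₁ ≤ b/(1−λ)`. -/
theorem net_extension
    {N M : ℕ} (hM : 0 < M) (B : (Fin N → ℝ) →ₗ[ℝ] (Fin M → ℝ))
    (K : ℕ) (hK : K ≤ N) (lam : ℝ) (hlam0 : 0 < lam) (hlam : lam < 1 / 2)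
    (a b : ℝ) (ha : 0 ≤ a) (hb : 0 ≤ b)
    (G : Set (Fin N → ℝ))
    (hG : ∀ f' ∈ G, l2norm f' = 1 ∧ Sparse K f')
    (hcover : ∀ f : Fin N → ℝ, l2norm f = 1 → Sparse K f →
      ∃ f' ∈ G, Function.support f' ⊆ Function.support f ∧ l2norm (f - f') ≤ lam)
    (hnet : ∀ f' ∈ G, a ≤ (1 / (M : ℝ)) * l1norm (B f')
      ∧ (1 / (M : ℝ)) * l1norm (B f') ≤ b) :
    ∀ f : Fin N → ℝ, l2norm f = 1 → Sparse K f →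
      a - lam * b / (1 - lam) ≤ (1 / (M : ℝ)) * l1norm (B f)
      ∧ (1 / (M : ℝ)) * l1norm (B f) ≤ b / (1 - lam) := by
  intro f₀ hf₀2 hf₀s
  have hlam1 : (0:ℝ) < 1 - lam := by linarith
  have hMpos : (0:ℝ) < 1 / (M:ℝ) := by positivity
  -- the set of values
  set S : Set ℝ := {x | ∃ g, l2norm g = 1 ∧ Sparse K g ∧ x = (1/(M:ℝ)) * l1norm (B g)} with hS
  have hne : S.Nonempty := ⟨_, f₀, hf₀2, hf₀s, rfl⟩
  -- bounded above
  have hbdd : BddAbove S := by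
    refine ⟨(1/(M:ℝ)) * ∑ i, l1norm (B (Pi.single i 1)), ?_⟩
    rintro x ⟨g, hg2, -, rfl⟩
    have hrep : g = ∑ i, g i • (Pi.single i (1:ℝ) : Fin N → ℝ) := by
      ext j
      rw [Finset.sum_apply]
      simp [Pi.single_apply]
    have hBg : B g = ∑ i, g i • B (Pi.single i 1) := by
      conv_lhs => rw [hrep]
      simp [map_sum, map_smul]
    have : l1norm (B g) ≤ ∑ i, l1norm (B (Pi.single i 1)) := by
      calc l1norm (B g) = l1norm (∑ i, g i • B (Pi.single i 1)) := by rw [hBg]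
        _ ≤ ∑ i, l1norm (g i • B (Pi.single i 1)) := l1_sum _ _
        _ ≤ ∑ i, l1norm (B (Pi.single i 1)) := by
            refine Finset.sum_le_sum fun i _ => ?_
            rw [l1_smul]
            have h1 : |g i| ≤ 1 := hg2 ▸ abs_le_l2 g i
            nlinarith [l1_nonneg (B (Pi.single i 1))]
    exact mul_le_mul_of_nonneg_left this (le_of_lt hMpos)
  have hS0 : 0 ≤ sSup S := by
    obtain ⟨x, g, hg2, hgs, rfl⟩ := hne
    exact le_trans (mul_nonneg hMpos.le (l1_nonneg _)) (le_csSup hbdd ⟨g, hg2, hgs, rfl⟩)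
  -- key decomposition for any unit K-sparse f
  have key : ∀ f : Fin N → ℝ, l2norm f = 1 → Sparse K f →
      ∃ f' ∈ G, (1/(M:ℝ)) * l1norm (B (f - f')) ≤ lam * sSup S := by
    intro f hf2 hfs
    obtain ⟨f', hf'G, hsupp, hdist⟩ := hcover f hf2 hfs
    refine ⟨f', hf'G, ?_⟩
    set g := f - f' with hg
    have hgs : Sparse K g := by
      obtain ⟨s, hcard, hz⟩ := hfs
      refine ⟨s, hcard, fun i hi => ?_⟩
      have hfi : f i = 0 := hz i hi
      have hf'i : f' i = 0 := by
        by_contra h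
        exact (by simpa [hfi] using hsupp h : False)
      simp [hg, hfi, hf'i]
    by_cases hg0 : g = 0
    · simp only [hg0, map_zero]
      have : l1norm (0 : Fin M → ℝ) = 0 := by simp [l1norm]
      rw [this, mul_zero]
      positivity
    · have ht : 0 < l2norm g := by
        rcases lt_or_eq_of_le (Real.sqrt_nonneg _) with h | h
        · exact h
        · exact absurd (l2_eq_zero h.symm) hg0
      set t := l2norm g with htd
      have hu2 : l2norm (t⁻¹ • g) = 1 := by
        rw [l2_smul, abs_of_pos (inv_pos.mpr ht)]
        field_simp
        exact htd.symm
      have hus : Sparse K (t⁻¹ • g) := by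
        obtain ⟨s, hcard, hz⟩ := hgs
        exact ⟨s, hcard, fun i hi => by simp [hz i hi]⟩
      have hmem : (1/(M:ℝ)) * l1norm (B (t⁻¹ • g)) ∈ S := ⟨_, hu2, hus, rfl⟩
      have hle : (1/(M:ℝ)) * l1norm (B (t⁻¹ • g)) ≤ sSup S := le_csSup hbdd hmem
      have hrw : l1norm (B g) = t * l1norm (B (t⁻¹ • g)) := by
        rw [map_smul, l1_smul, abs_of_pos (inv_pos.mpr ht)]
        field_simp
      rw [hrw]
      calc (1/(M:ℝ)) * (t * l1norm (B (t⁻¹ • g)))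
          = t * ((1/(M:ℝ)) * l1norm (B (t⁻¹ • g))) := by ring
        _ ≤ lam * sSup S := by
            have h1 : (0:ℝ) ≤ (1/(M:ℝ)) * l1norm (B (t⁻¹ • g)) := by
              have := l1_nonneg (B (t⁻¹ • g)); positivity
            have h2 : t ≤ lam := hdist
            nlinarith
  -- the sup satisfies sSup S ≤ b + lam * sSup S
  have hsup_le : sSup S ≤ b / (1 - lam) := by
    have h1 : sSup S ≤ b + lam * sSup S := by
      refine csSup_le hne ?_
      rintro x ⟨g, hg2, hgs, rfl⟩
      obtain ⟨f', hf'G, hkey⟩ := key g hg2 hgs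
      have htri : l1norm (B g) ≤ l1norm (B f') + l1norm (B (g - f')) := by
        have : B g = B f' + B (g - f') := by rw [← map_add]; ring_nf
        rw [this]; exact l1_add _ _
      have hb' := (hnet f' hf'G).2
      calc (1/(M:ℝ)) * l1norm (B g)
          ≤ (1/(M:ℝ)) * (l1norm (B f') + l1norm (B (g - f'))) :=
            mul_le_mul_of_nonneg_left htri (le_of_lt hMpos)
        _ = (1/(M:ℝ)) * l1norm (B f') + (1/(M:ℝ)) * l1norm (B (g - f')) := by ring
        _ ≤ b + lam * sSup S := add_le_add hb' hkey
    rw [le_div_iff₀ hlam1]; linarith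
  -- conclude for f₀
  obtain ⟨f', hf'G, hkey⟩ := key f₀ hf₀2 hf₀s
  have hmem0 : (1/(M:ℝ)) * l1norm (B f₀) ∈ S := ⟨f₀, hf₀2, hf₀s, rfl⟩
  constructor
  · have htri : l1norm (B f') ≤ l1norm (B f₀) + l1norm (B (f₀ - f')) := by
      have : B f' = B f₀ + (-(B (f₀ - f'))) := by rw [← map_neg, ← map_add]; ring_nf
      rw [this]
      refine le_trans (l1_add _ _) ?_
      rw [l1_neg]
    have ha' := (hnet f' hf'G).1
    have h2 : lam * sSup S ≤ lam * (b / (1 - lam)) :=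
      mul_le_mul_of_nonneg_left hsup_le (le_of_lt hlam0)
    have h3 : (1/(M:ℝ)) * l1norm (B f') ≤
        (1/(M:ℝ)) * l1norm (B f₀) + (1/(M:ℝ)) * l1norm (B (f₀ - f')) := by
      calc (1/(M:ℝ)) * l1norm (B f')
          ≤ (1/(M:ℝ)) * (l1norm (B f₀) + l1norm (B (f₀ - f'))) :=
            mul_le_mul_of_nonneg_left htri (le_of_lt hMpos)
        _ = _ := by ring
    have : lam * b / (1 - lam) = lam * (b / (1 - lam)) := by ring
    rw [this]
    linarith
  · exact le_trans (le_csSup hbdd hmem0) hsup_le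
end
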